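/- arXiv:1503.01535 — 7 statements merged into one kernel-verified Lean document; each statement's English description precedes it below -/
import Mathlib

section
/- Let N and m be natural numbers with N ≥ 1, and let σ be a permutation of {1,…,N}, where σ(n) is the position (1-indexed) at which container n is retrieved; containers are indexed in increasing order of departure time (container n departs before container n' whenever n < n'). If for every n ∈ {1,…,N} at most (n−1)+m containers are retrieved before container n (i.e., σ(n) ≤ n+m), then for every n ∈ {1,…,N} the number of out-of-order retrievals before container n is at most m, i.e., the cardinality of { n' ∈ {1,…,N} : n' > n and σ(n') < σ(n) } is at most m. -/
/-- A retrieval order for `N` containers is a permutation `σ` of `{1,…,N}`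
(modeled as `Equiv.Perm (Fin N)`, where container `n : Fin N` corresponds to the
1-indexed container `n+1` and `σ n` to the 1-indexed retrieval position `σ n + 1`).
Containers are indexed in increasing order of departure time.  If for every container `n`
at most `(n−1)+m` containers are retrieved before it (1-indexed: `σ(n) ≤ n + m`, i.e.
`(σ n : ℕ) + 1 ≤ ((n : ℕ) + 1) + m`), then for every `n` the number of out-of-order
retrievals before container `n`, i.e. the number of `n' > n` with `σ n' < σ n`,
is at most `m`. -/
theorem stmt0 (N m : ℕ) (hN : 1 ≤ N) (σ : Equiv.Perm (Fin N))
    (h : ∀ n : Fin N, (σ n : ℕ) + 1 ≤ ((n : ℕ) + 1) + m) :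
    ∀ n : Fin N,
      (Finset.univ.filter (fun n' : Fin N => n < n' ∧ σ n' < σ n)).card ≤ m := by
  classical
  intro n
  -- total containers with retrieval position < σ n
  have hcardP : (Finset.univ.filter fun n' : Fin N => σ n' < σ n).card = (σ n : ℕ) := by
    have he : (Finset.univ.filter fun n' : Fin N => σ n' < σ n)
        = (Finset.Iio (σ n)).map σ.symm.toEmbedding := by
      ext x
      simp only [Finset.mem_filter, Finset.mem_univ, true_and, Finset.mem_map,
        Finset.mem_Iio, Equiv.coe_toEmbedding]
      constructor
      · intro hx; exact ⟨σ x, hx, by simp⟩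
      · rintro ⟨y, hy, rfl⟩; simpa using hy
    rw [he, Finset.card_map, Fin.card_Iio]
  -- split by n < n' or n' ≤ n
  have hsplit1 : (Finset.univ.filter fun n' : Fin N => n < n' ∧ σ n' < σ n).card
      + (Finset.univ.filter fun n' : Fin N => ¬ n < n' ∧ σ n' < σ n).card
      = (σ n : ℕ) := by
    rw [← hcardP]
    have := Finset.card_filter_add_card_filter_not
      (s := Finset.univ.filter fun n' : Fin N => σ n' < σ n) (p := fun n' => n < n')
    simp only [Finset.filter_filter] at this
    rw [← this]
    congr 1 <;> · congr 1; ext x; simp [and_comm]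
  -- containers n' ≤ n : there are n+1 of them
  have hcardIic : (Finset.univ.filter fun n' : Fin N => ¬ n < n').card = (n : ℕ) + 1 := by
    have he : (Finset.univ.filter fun n' : Fin N => ¬ n < n') = Finset.Iic n := by
      ext x; simp [not_lt]
    rw [he, Fin.card_Iic]
  have hsplit2 : (Finset.univ.filter fun n' : Fin N => ¬ n < n' ∧ σ n' < σ n).card
      + (Finset.univ.filter fun n' : Fin N => ¬ n < n' ∧ ¬ σ n' < σ n).card
      = (n : ℕ) + 1 := by
    rw [← hcardIic]
    have := Finset.card_filter_add_card_filter_not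
      (s := Finset.univ.filter fun n' : Fin N => ¬ n < n') (p := fun n' => σ n' < σ n)
    simp only [Finset.filter_filter] at this
    exact this
  -- bound on B = {n' ≤ n, σ n' ≥ σ n}
  have hB : (Finset.univ.filter fun n' : Fin N => ¬ n < n' ∧ ¬ σ n' < σ n).card
      ≤ ((n : ℕ) + m + 1) - (σ n : ℕ) := by
    have := Finset.card_le_card_of_injOn (f := fun n' : Fin N => (σ n' : ℕ))
      (s := Finset.univ.filter fun n' : Fin N => ¬ n < n' ∧ ¬ σ n' < σ n)
      (t := Finset.Icc (σ n : ℕ) ((n : ℕ) + m))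
      (by
        intro x hx
        simp only [Finset.mem_coe, Finset.mem_filter, Finset.mem_univ, true_and, not_lt] at hx
        obtain ⟨hx1, hx2⟩ := hx
        simp only [Finset.mem_coe, Finset.mem_Icc]
        constructor
        · exact_mod_cast hx2
        · have := h x
          have hxn : (x : ℕ) ≤ (n : ℕ) := hx1
          omega)
      (by
        intro a _ b _ hab
        have : σ a = σ b := Fin.val_injective hab
        exact σ.injective this)
    simpa [Nat.card_Icc] using this
  have hσn := h n
  omega
end

section
/- Consider the CRP model with a strictly increasing departure schedule d and no upper time windows, and suppose the set of FCFS-feasible sequences from the given initial configuration is nonempty. Let R* be the minimum relocation count over all FCFS-feasible sequences, and let H be any natural number with H ≥ R*. Then there exists an FCFS-feasible sequence whose relocation count equals R* and in which, for every n ∈ {1,…,N}, container n is retrieved no later than time d(n) + H + max(n − d(n), 0). In other words, imposing the retrieval time window [d(n), d(n) + δ*(n)] with δ*(n) = H + max(n − d(n), 0) for every container does not increase the minimum number of relocations. -/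
/-! ## The container relocation problem (CRP) model

A bay with `C` columns and at most `P` tiers, containing containers labeled `1,…,N`.
A configuration assigns to each column its stack of container labels; in our encoding the
*head* of the list is the *top* of the stack. -/

/-- A bay configuration: for each column, the stack of container labels in it
(head of the list = top of the stack). -/
abbrev CRPConfig (C : ℕ) := Fin C → List ℕ

/-- A crane move: idle (no change), relocation of the top container of column `src`
onto column `dst`, or retrieval of the top container of column `src` out of the bay. -/
inductive CRPMove (C : ℕ) where
  | idle : CRPMove C
  | reloc (src dst : Fin C) : CRPMove C
  | retrieve (src : Fin C) : CRPMove C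

/-- Whether a move is a relocation. -/
def CRPMove.isReloc {C : ℕ} : CRPMove C → Bool
  | .reloc _ _ => true
  | _ => false

/-- `CRPStep P b mv b'` holds when the move `mv` is applicable to configuration `b`
(with height limit `P`) and transforms it into `b'`. -/
def CRPStep {C : ℕ} (P : ℕ) (b : CRPConfig C) : CRPMove C → CRPConfig C → Prop
  | .idle, b' => b' = b
  | .reloc i k, b' =>
      i ≠ k ∧ b i ≠ [] ∧ (b k).length < P ∧
      b' = fun j => if j = i then (b i).tail
                    else if j = k then (b i).head! :: b k else b j
  | .retrieve i, b' =>
      b i ≠ [] ∧ b' = fun j => if j = i then (b i).tail else b j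

/-- A move sequence over horizon `T` for a `C × P` bay with containers `1,…,N`:
`conf 0` is the initial configuration, in which all `N` containers (and nothing else)
are present, each at most once, with stacks of height at most `P`; `mv t` is the move
performed at time-step `t ∈ {1,…,T}`, and `conf t` the configuration after it. -/
structure CRPSeq (C P N T : ℕ) where
  conf : ℕ → CRPConfig C
  mv : ℕ → CRPMove C
  init_height : ∀ i, (conf 0 i).length ≤ P
  init_labels : ∀ i, ∀ c ∈ conf 0 i, 1 ≤ c ∧ c ≤ N
  init_nodup : ∀ i, (conf 0 i).Nodup
  init_disjoint : ∀ i j, i ≠ j → ∀ c, c ∈ conf 0 i → c ∉ conf 0 j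
  init_all : ∀ n, 1 ≤ n → n ≤ N → ∃ i, n ∈ conf 0 i
  step : ∀ t, 1 ≤ t → t ≤ T → CRPStep P (conf (t - 1)) (mv t) (conf t)

/-- The relocation count of a move sequence: the number of time-steps in `{1,…,T}` whose
move is a relocation. -/
def relocCount {C P N T : ℕ} (M : CRPSeq C P N T) : ℕ :=
  ((Finset.Icc 1 T).filter (fun t => (M.mv t).isReloc = true)).card

/-- Container `n` is retrieved at time-step `t` in the sequence `M`. -/
def RetrievesAt {C P N T : ℕ} (M : CRPSeq C P N T) (n t : ℕ) : Prop :=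
  1 ≤ t ∧ t ≤ T ∧ ∃ i : Fin C, M.mv t = .retrieve i ∧ (M.conf (t - 1) i).head? = some n

/-- Container `n` is still in the bay at the beginning of time-step `t`. -/
def InBay {C P N T : ℕ} (M : CRPSeq C P N T) (n t : ℕ) : Prop :=
  ∃ i : Fin C, n ∈ M.conf (t - 1) i

/-- Container `n` is available at time-step `t`: its departure time has come and it is
still in the bay at the beginning of step `t`. -/
def AvailableAt {C P N T : ℕ} (M : CRPSeq C P N T) (d : ℕ → ℕ) (n t : ℕ) : Prop :=
  1 ≤ n ∧ n ≤ N ∧ d n ≤ t ∧ InBay M n t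

/-- `M` is a feasible sequence with flexibility level `m` for departure schedule `d`,
with retrieval times `r`: every container `n ∈ {1,…,N}` is retrieved exactly once, at
time `r n ≥ d n`, and for every `n` at most `(n−1)+m` containers are retrieved before
container `n`.  Flexibility level `0` is FCFS-feasibility (containers retrieved exactly
in the order `1,…,N`). -/
structure CRPFeasible {C P N T : ℕ} (M : CRPSeq C P N T) (d : ℕ → ℕ) (m : ℕ)
    (r : ℕ → ℕ) : Prop where
  retrieves : ∀ n, 1 ≤ n → n ≤ N → RetrievesAt M n (r n)
  unique : ∀ n t, 1 ≤ n → n ≤ N → RetrievesAt M n t → t = r n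
  onTime : ∀ n, 1 ≤ n → n ≤ N → d n ≤ r n
  flex : ∀ n, 1 ≤ n → n ≤ N →
    {n' | 1 ≤ n' ∧ n' ≤ N ∧ r n' < r n}.ncard ≤ (n - 1) + m

/-- A strictly increasing departure schedule on `{1,…,N}` with `d 1 ≥ 1`. -/
def StrictSchedule (N : ℕ) (d : ℕ → ℕ) : Prop :=
  1 ≤ d 1 ∧ ∀ n n', 1 ≤ n → n' ≤ N → n < n' → d n < d n'

/-- The set of relocation counts of FCFS-feasible sequences (over all horizons `T`) from
the initial configuration `b0`, for departure schedule `d`. -/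
def FCFSRelocSet (C P N : ℕ) (d : ℕ → ℕ) (b0 : CRPConfig C) : Set ℕ :=
  {R | ∃ T, ∃ M : CRPSeq C P N T, ∃ r,
        M.conf 0 = b0 ∧ CRPFeasible M d 0 r ∧ relocCount M = R}

section CRPAux

variable {C P N T : ℕ}

lemma crp_step_mem {b b' : CRPConfig C} {m : CRPMove C}
    (h : CRPStep P b m b') {n : ℕ} {j : Fin C} (hn : n ∈ b' j) : ∃ j', n ∈ b j' := by
  cases m with
  | idle =>
    have hb : b' = b := h
    exact ⟨j, hb ▸ hn⟩
  | reloc i k =>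
    obtain ⟨hik, hne, _, rfl⟩ := h
    dsimp only at hn
    by_cases hj : j = i
    · rw [if_pos hj] at hn
      exact ⟨i, List.mem_of_mem_tail hn⟩
    · rw [if_neg hj] at hn
      by_cases hk : j = k
      · rw [if_pos hk] at hn
        rcases List.mem_cons.1 hn with h1 | h1
        · exact ⟨i, h1 ▸ List.head!_mem_self hne⟩
        · exact ⟨k, h1⟩
      · rw [if_neg hk] at hn
        exact ⟨j, hn⟩
  | retrieve i =>
    obtain ⟨hne, rfl⟩ := h
    dsimp only at hn
    by_cases hj : j = i
    · rw [if_pos hj] at hn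
      exact ⟨i, List.mem_of_mem_tail hn⟩
    · rw [if_neg hj] at hn
      exact ⟨j, hn⟩

lemma crp_conf_mem (M : CRPSeq C P N T) :
    ∀ t, t ≤ T → ∀ (j : Fin C) (n : ℕ), n ∈ M.conf t j → ∃ j', n ∈ M.conf 0 j' := by
  intro t
  induction t with
  | zero => intro _ j n hn; exact ⟨j, hn⟩
  | succ t ih =>
    intro ht j n hn
    have hstep := M.step (t + 1) (by omega) ht
    simp only [Nat.add_sub_cancel] at hstep
    obtain ⟨j', hj'⟩ := crp_step_mem hstep hn
    exact ih (by omega) j' n hj'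

lemma crp_conf_labels (M : CRPSeq C P N T) {t : ℕ} (ht : t ≤ T) {j : Fin C} {n : ℕ}
    (hn : n ∈ M.conf t j) : 1 ≤ n ∧ n ≤ N := by
  obtain ⟨j', hj'⟩ := crp_conf_mem M t ht j n hn
  exact M.init_labels j' n hj'

lemma crp_retrievesAt_eq {M : CRPSeq C P N T} {a b t : ℕ}
    (ha : RetrievesAt M a t) (hb : RetrievesAt M b t) : a = b := by
  obtain ⟨_, _, i, hi, hh⟩ := ha
  obtain ⟨_, _, i', hi', hh'⟩ := hb
  rw [hi] at hi'
  cases hi'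
  rw [hh] at hh'
  exact Option.some_inj.mp hh'

lemma crp_r_strictMono {M : CRPSeq C P N T} {d : ℕ → ℕ} {r : ℕ → ℕ}
    (hf : CRPFeasible M d 0 r) :
    ∀ a b, 1 ≤ a → b ≤ N → a < b → r a < r b := by
  classical
  have hinj : ∀ a b, 1 ≤ a → a ≤ N → 1 ≤ b → b ≤ N → r a = r b → a = b := by
    intro a b ha ha' hb hb' h
    have h1 := hf.retrieves a ha ha'
    have h2 := hf.retrieves b hb hb'
    rw [h] at h1
    exact crp_retrievesAt_eq h1 h2
  set S : ℕ → Finset ℕ := fun n => (Finset.Icc 1 N).filter (fun n' => r n' < r n) with hS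
  have hcard : ∀ n, 1 ≤ n → n ≤ N → (S n).card ≤ n - 1 := by
    intro n hn hn'
    have hfx := hf.flex n hn hn'
    have heq : {n' | 1 ≤ n' ∧ n' ≤ N ∧ r n' < r n} = ↑(S n) := by
      ext x
      simp [hS, Finset.mem_filter, Finset.mem_Icc, and_assoc]
    rw [heq, Set.ncard_coe_finset] at hfx
    omega
  have hlt : ∀ a b, 1 ≤ a → a ≤ N → 1 ≤ b → b ≤ N → r a < r b → (S a).card < (S b).card := by
    intro a b ha ha' hb hb' hab
    apply Finset.card_lt_card
    constructor
    · intro x hx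
      simp only [hS, Finset.mem_filter, Finset.mem_Icc] at hx ⊢
      exact ⟨hx.1, lt_trans hx.2 hab⟩
    · intro hsub
      have haS : a ∈ S b := by
        simp only [hS, Finset.mem_filter, Finset.mem_Icc]
        exact ⟨⟨ha, ha'⟩, hab⟩
      have := hsub haS
      simp only [hS, Finset.mem_filter, Finset.mem_Icc] at this
      omega
  have hcard_eq : ∀ n, 1 ≤ n → n ≤ N → (S n).card = n - 1 := by
    intro n
    induction n using Nat.strong_induction_on with
    | _ n ih =>
      intro hn hn'
      by_contra hneq
      have h1 : (S n).card ≤ n - 1 := hcard n hn hn'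
      set m := (S n).card + 1 with hm
      have hm1 : 1 ≤ m := by omega
      have hm2 : m ≤ n - 1 := by omega
      have hSm : (S m).card = m - 1 := ih m (by omega) hm1 (by omega)
      have hmn : m ≠ n := by omega
      have hrm : r m ≠ r n := fun h => hmn (hinj m n hm1 (by omega) hn hn' h)
      rcases lt_or_gt_of_ne hrm with h | h
      · have := hlt m n hm1 (by omega) hn hn' h
        omega
      · have := hlt n m hn hn' hm1 (by omega) h
        omega
  intro a b ha hb hab
  have ha' : a ≤ N := by omega
  have hb1 : 1 ≤ b := by omega
  rcases lt_trichotomy (r a) (r b) with h | h | h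
  · exact h
  · exact absurd (hinj a b ha ha' hb1 hb h) (by omega)
  · exfalso
    have := hlt b a hb1 hb ha ha' h
    rw [hcard_eq a ha ha', hcard_eq b hb1 hb] at this
    omega

end CRPAux
section CRPAppend

variable {C P N : ℕ} {T' : ℕ}

/-- Configurations of the sequence obtained by appending one move at time `t0`. -/
def appConf (M' : CRPSeq C P N T') (t0 : ℕ) (cnew : CRPConfig C) : ℕ → CRPConfig C :=
  fun s => if s ≤ T' then M'.conf s else if s < t0 then M'.conf T' else cnew

/-- Moves of the sequence obtained by appending one move at time `t0`. -/
def appMv (M' : CRPSeq C P N T') (t0 : ℕ) (mv0 : CRPMove C) : ℕ → CRPMove C :=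
  fun s => if s = t0 then mv0 else if s ≤ T' then M'.mv s else .idle

lemma appConf_le {M' : CRPSeq C P N T'} {t0 s : ℕ} {cnew : CRPConfig C} (h : s ≤ T') :
    appConf M' t0 cnew s = M'.conf s := if_pos h

lemma appConf_mid {M' : CRPSeq C P N T'} {t0 s : ℕ} {cnew : CRPConfig C}
    (h1 : T' < s) (h2 : s < t0) : appConf M' t0 cnew s = M'.conf T' := by
  unfold appConf
  rw [if_neg (by omega), if_pos h2]

lemma appConf_ge {M' : CRPSeq C P N T'} {t0 s : ℕ} {cnew : CRPConfig C}
    (h1 : T' < s) (h2 : t0 ≤ s) : appConf M' t0 cnew s = cnew := by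
  unfold appConf
  rw [if_neg (by omega), if_neg (by omega)]

lemma appConf_pred {M' : CRPSeq C P N T'} {t0 : ℕ} {cnew : CRPConfig C} (h : T' < t0) :
    appConf M' t0 cnew (t0 - 1) = M'.conf T' := by
  by_cases h1 : t0 - 1 ≤ T'
  · have h2 : t0 - 1 = T' := by omega
    rw [appConf_le h1, h2]
  · exact appConf_mid (by omega) (by omega)

lemma appMv_self {M' : CRPSeq C P N T'} {t0 : ℕ} {mv0 : CRPMove C} :
    appMv M' t0 mv0 t0 = mv0 := if_pos rfl

lemma appMv_le {M' : CRPSeq C P N T'} {t0 s : ℕ} {mv0 : CRPMove C}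
    (h : s ≤ T') (h2 : T' < t0) : appMv M' t0 mv0 s = M'.mv s := by
  unfold appMv
  rw [if_neg (by omega), if_pos h]

lemma appMv_mid {M' : CRPSeq C P N T'} {t0 s : ℕ} {mv0 : CRPMove C}
    (h : T' < s) (h2 : s ≠ t0) : appMv M' t0 mv0 s = .idle := by
  unfold appMv
  rw [if_neg h2, if_neg (by omega)]

/-- Append a single (non-idle) move at time `t0 > T'`, idling in between. -/
def appendMove (M' : CRPSeq C P N T') (t0 : ℕ) (ht0 : T' < t0) (mv0 : CRPMove C)
    (cnew : CRPConfig C) (hstep : CRPStep P (M'.conf T') mv0 cnew) : CRPSeq C P N t0 where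
  conf := appConf M' t0 cnew
  mv := appMv M' t0 mv0
  init_height := by
    intro i; rw [appConf_le (Nat.zero_le _)]; exact M'.init_height i
  init_labels := by
    intro i c hc; rw [appConf_le (Nat.zero_le _)] at hc; exact M'.init_labels i c hc
  init_nodup := by
    intro i; rw [appConf_le (Nat.zero_le _)]; exact M'.init_nodup i
  init_disjoint := by
    intro i j hij c hc
    rw [appConf_le (Nat.zero_le _)] at hc ⊢
    exact M'.init_disjoint i j hij c hc
  init_all := by
    intro n h1 h2
    obtain ⟨i, hi⟩ := M'.init_all n h1 h2
    exact ⟨i, by rw [appConf_le (Nat.zero_le _)]; exact hi⟩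
  step := by
    intro s hs1 hs2
    by_cases hsT : s ≤ T'
    · rw [appMv_le hsT ht0, appConf_le hsT, appConf_le (by omega : s - 1 ≤ T')]
      exact M'.step s hs1 hsT
    · by_cases hst0 : s = t0
      · subst hst0
        rw [appMv_self, appConf_pred ht0, appConf_ge (by omega) le_rfl]
        exact hstep
      · rw [appMv_mid (by omega) hst0]
        show appConf M' t0 cnew s = appConf M' t0 cnew (s - 1)
        have hpred : appConf M' t0 cnew (s - 1) = M'.conf T' := by
          by_cases h : s - 1 ≤ T'
          · have hs' : s - 1 = T' := by omega
            rw [appConf_le h, hs']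
          · exact appConf_mid (by omega) (by omega)
        rw [hpred, appConf_mid (by omega) (by omega)]

lemma appendMove_conf {M' : CRPSeq C P N T'} {t0 : ℕ} {ht0 : T' < t0} {mv0 : CRPMove C}
    {cnew : CRPConfig C} {hstep : CRPStep P (M'.conf T') mv0 cnew} :
    (appendMove M' t0 ht0 mv0 cnew hstep).conf = appConf M' t0 cnew := rfl

lemma appendMove_mv {M' : CRPSeq C P N T'} {t0 : ℕ} {ht0 : T' < t0} {mv0 : CRPMove C}
    {cnew : CRPConfig C} {hstep : CRPStep P (M'.conf T') mv0 cnew} :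
    (appendMove M' t0 ht0 mv0 cnew hstep).mv = appMv M' t0 mv0 := rfl

lemma appendMove_relocCount (M' : CRPSeq C P N T') (t0 : ℕ) (ht0 : T' < t0)
    (mv0 : CRPMove C) (cnew : CRPConfig C) (hstep : CRPStep P (M'.conf T') mv0 cnew) :
    relocCount (appendMove M' t0 ht0 mv0 cnew hstep) =
      relocCount M' + (if mv0.isReloc = true then 1 else 0) := by
  classical
  unfold relocCount
  rw [appendMove_mv]
  have hsplit : Finset.Icc 1 t0 = Finset.Icc 1 T' ∪ Finset.Ioc T' t0 := by
    ext x
    simp only [Finset.mem_Icc, Finset.mem_union, Finset.mem_Ioc]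
    omega
  rw [hsplit, Finset.filter_union, Finset.card_union_of_disjoint ?hdisj]
  case hdisj =>
    apply Finset.disjoint_filter_filter
    rw [Finset.disjoint_left]
    intro x hx hx'
    simp only [Finset.mem_Icc] at hx
    simp only [Finset.mem_Ioc] at hx'
    omega
  congr 1
  · congr 1
    apply Finset.filter_congr
    intro x hx
    simp only [Finset.mem_Icc] at hx
    rw [appMv_le hx.2 ht0]
  · have hset : (Finset.Ioc T' t0).filter (fun t => (appMv M' t0 mv0 t).isReloc = true)
        = if mv0.isReloc = true then {t0} else ∅ := by
      ext x
      simp only [Finset.mem_filter, Finset.mem_Ioc]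
      by_cases hx : x = t0
      · subst hx
        rw [appMv_self]
        split_ifs with h <;> simp [h, ht0]
      · constructor
        · rintro ⟨⟨h1, h2⟩, h3⟩
          rw [appMv_mid h1 hx] at h3
          exact absurd h3 (by simp [CRPMove.isReloc])
        · intro h
          split_ifs at h <;> simp at h
          exact absurd h hx
    rw [hset]
    split_ifs <;> simp

lemma appendMove_retrievesAt {M' : CRPSeq C P N T'} {t0 : ℕ} {ht0 : T' < t0}
    {mv0 : CRPMove C} {cnew : CRPConfig C} {hstep : CRPStep P (M'.conf T') mv0 cnew}
    {n s : ℕ} (h : RetrievesAt M' n s) :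
    RetrievesAt (appendMove M' t0 ht0 mv0 cnew hstep) n s := by
  obtain ⟨h1, h2, i, hi, hh⟩ := h
  refine ⟨h1, by omega, i, ?_, ?_⟩
  · rw [appendMove_mv, appMv_le h2 ht0]
    exact hi
  · rw [appendMove_conf, appConf_le (by omega : s - 1 ≤ T')]
    exact hh

lemma appendMove_retrievesAt_elim {M' : CRPSeq C P N T'} {t0 : ℕ} {ht0 : T' < t0}
    {mv0 : CRPMove C} {cnew : CRPConfig C} {hstep : CRPStep P (M'.conf T') mv0 cnew}
    {n s : ℕ} (h : RetrievesAt (appendMove M' t0 ht0 mv0 cnew hstep) n s) :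
    (s = t0 ∧ ∃ i, mv0 = .retrieve i ∧ ((M'.conf T') i).head? = some n) ∨
      RetrievesAt M' n s := by
  obtain ⟨h1, h2, i, hi, hh⟩ := h
  rw [appendMove_mv] at hi
  rw [appendMove_conf] at hh
  by_cases hst : s = t0
  · subst hst
    rw [appMv_self] at hi
    rw [appConf_pred ht0] at hh
    exact Or.inl ⟨rfl, i, hi, hh⟩
  · by_cases hsT : s ≤ T'
    · right
      refine ⟨h1, hsT, i, ?_, ?_⟩
      · rw [appMv_le hsT ht0] at hi; exact hi
      · rw [appConf_le (by omega : s - 1 ≤ T')] at hh; exact hh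
    · rw [appMv_mid (by omega) hst] at hi
      exact absurd hi (by simp)

/-- The empty (horizon-0) sequence with a given legal initial configuration. -/
def idleSeq (M : CRPSeq C P N T) : CRPSeq C P N 0 where
  conf := fun _ => M.conf 0
  mv := fun _ => .idle
  init_height := M.init_height
  init_labels := M.init_labels
  init_nodup := M.init_nodup
  init_disjoint := M.init_disjoint
  init_all := M.init_all
  step := by intro t h1 h2; omega

end CRPAppend
/-- with a strictly increasing departure schedule `d` and no upper time
windows, suppose the set of FCFS-feasible sequences from the initial configuration `b0`
is nonempty.  Let `R* = sInf (FCFSRelocSet C P N d b0)` be the minimum relocation count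
over all FCFS-feasible sequences, and let `H ≥ R*`.  Then there is an FCFS-feasible
sequence whose relocation count equals `R*` and in which every container
`n ∈ {1,…,N}` is retrieved no later than `d n + H + max (n − d n) 0` (the `max` with 0
realized by truncated `ℕ` subtraction): imposing the retrieval time windows
`[d n, d n + δ* n]` with `δ* n = H + (n - d n)` does not increase the minimum number of
relocations. -/
theorem stmt2 (C P N : ℕ) (hN : 1 ≤ N) (d : ℕ → ℕ) (hd : StrictSchedule N d)
    (b0 : CRPConfig C)
    (hne : ∃ T, ∃ M : CRPSeq C P N T, ∃ r, M.conf 0 = b0 ∧ CRPFeasible M d 0 r)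
    (H : ℕ) (hH : sInf (FCFSRelocSet C P N d b0) ≤ H) :
    ∃ T, ∃ M : CRPSeq C P N T, ∃ r, M.conf 0 = b0 ∧ CRPFeasible M d 0 r ∧
      relocCount M = sInf (FCFSRelocSet C P N d b0) ∧
      ∀ n, 1 ≤ n → n ≤ N → r n ≤ d n + (H + (n - d n)) := by
  classical
  have hsetne : (FCFSRelocSet C P N d b0).Nonempty := by
    obtain ⟨T0, M0, r0, h1, h2⟩ := hne
    exact ⟨relocCount M0, T0, M0, r0, h1, h2, rfl⟩
  obtain ⟨T, M, r, hconf0, hfeas, hRC⟩ := Nat.sInf_mem hsetne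
  have hrmono := crp_r_strictMono hfeas
  have hdmono := hd.2
  have hd1 : ∀ n, 1 ≤ n → n ≤ N → 1 ≤ d n := by
    intro n h1 h2
    rcases eq_or_lt_of_le h1 with h | h
    · rw [← h]; exact hd.1
    · exact le_trans hd.1 (le_of_lt (hd.2 1 n le_rfl h2 h))
  set ρ : ℕ → ℕ :=
    fun t => ((Finset.Icc 1 t).filter (fun s => (M.mv s).isReloc = true)).card with hρdef
  have hρ0 : ρ 0 = 0 := by simp [hρdef]
  have hρsucc : ∀ t, ρ (t + 1) = ρ t + (if (M.mv (t + 1)).isReloc = true then 1 else 0) := by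
    intro t
    have hins : Finset.Icc 1 (t + 1) = insert (t + 1) (Finset.Icc 1 t) := by
      ext x
      simp only [Finset.mem_Icc, Finset.mem_insert]
      omega
    simp only [hρdef, hins, Finset.filter_insert]
    split_ifs with h
    · rw [Finset.card_insert_of_notMem (by simp)]
    · rfl
  have key : ∀ t, t ≤ T → ∃ (T' k : ℕ) (M' : CRPSeq C P N T') (r' : ℕ → ℕ),
      M'.conf 0 = M.conf 0 ∧
      M'.conf T' = M.conf t ∧
      relocCount M' = ρ t ∧
      k ≤ N ∧
      (∀ n, 1 ≤ n → n ≤ N → (r n ≤ t ↔ n ≤ k)) ∧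
      (∀ n, 1 ≤ n → n ≤ k → RetrievesAt M' n (r' n) ∧ d n ≤ r' n ∧ r' n ≤ d n + ρ t) ∧
      (∀ n s, RetrievesAt M' n s → 1 ≤ n ∧ n ≤ k ∧ s = r' n) ∧
      (∀ a b, 1 ≤ a → b ≤ k → a < b → r' a < r' b) ∧
      T' ≤ (if k = 0 then 0 else d k) + ρ t := by
    intro t
    induction t with
    | zero =>
      intro _
      refine ⟨0, 0, idleSeq M, fun _ => 0, rfl, rfl, ?_, by omega, ?_, ?_, ?_, ?_, by simp⟩
      · rw [hρ0]; simp [relocCount]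
      · intro n h1 h2
        constructor
        · intro h
          have := (hfeas.retrieves n h1 h2).1
          omega
        · intro h; omega
      · exact fun n h1 h2 => absurd (h1.trans h2) (by omega)
      · intro n s hret
        exact absurd (hret.1.trans hret.2.1) (by omega)
      · exact fun a b h1 h2 hab => absurd ((by omega : 1 ≤ b).trans h2) (by omega)
    | succ t ih =>
      intro ht
      obtain ⟨T', k, M', r', hc0, hcT, hrc, hkN, hiff, hinv2, hinv3, hinv4, hinv5⟩ :=
        ih (by omega)
      have hstepM : CRPStep P (M.conf t) (M.mv (t + 1)) (M.conf (t + 1)) := by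
        have := M.step (t + 1) (by omega) ht
        simpa using this
      cases hmv : M.mv (t + 1) with
      | idle =>
        rw [hmv] at hstepM
        have hconf_eq : M.conf (t + 1) = M.conf t := hstepM
        have hρ1 : ρ (t + 1) = ρ t := by rw [hρsucc t, hmv]; simp [CRPMove.isReloc]
        have hnoretr : ∀ n, 1 ≤ n → n ≤ N → r n ≠ t + 1 := by
          intro n h1 h2 heq
          obtain ⟨_, _, i, hi, _⟩ := hfeas.retrieves n h1 h2
          rw [heq, hmv] at hi
          exact absurd hi (by simp)
        refine ⟨T', k, M', r', hc0, ?_, ?_, hkN, ?_, ?_, hinv3, hinv4, ?_⟩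
        · rw [hconf_eq]; exact hcT
        · rw [hρ1]; exact hrc
        · intro n h1 h2
          have hne' := hnoretr n h1 h2
          rw [← hiff n h1 h2]
          omega
        · intro n h1 h2
          rw [hρ1]
          exact hinv2 n h1 h2
        · rw [hρ1]; exact hinv5
      | reloc i j =>
        rw [hmv] at hstepM
        obtain ⟨hij, hnonempty, hlen, hconf'⟩ := hstepM
        have hρ1 : ρ (t + 1) = ρ t + 1 := by rw [hρsucc t, hmv]; simp [CRPMove.isReloc]
        have hnoretr : ∀ n, 1 ≤ n → n ≤ N → r n ≠ t + 1 := by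
          intro n h1 h2 heq
          obtain ⟨_, _, i', hi, _⟩ := hfeas.retrieves n h1 h2
          rw [heq, hmv] at hi
          exact absurd hi (by simp)
        have hstep' : CRPStep P (M'.conf T') (CRPMove.reloc i j) (M.conf (t + 1)) := by
          rw [hcT]
          exact ⟨hij, hnonempty, hlen, hconf'⟩
        refine ⟨T' + 1, k, appendMove M' (T' + 1) (Nat.lt_succ_self T') (.reloc i j)
          (M.conf (t + 1)) hstep', r', ?_, ?_, ?_, hkN, ?_, ?_, ?_, hinv4, ?_⟩
        · rw [appendMove_conf, appConf_le (Nat.zero_le _)]; exact hc0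
        · rw [appendMove_conf, appConf_ge (Nat.lt_succ_self T') le_rfl]
        · rw [appendMove_relocCount, hrc, hρ1]; simp [CRPMove.isReloc]
        · intro n h1 h2
          have hne' := hnoretr n h1 h2
          rw [← hiff n h1 h2]
          omega
        · intro n h1 h2
          obtain ⟨hr1, hr2, hr3⟩ := hinv2 n h1 h2
          exact ⟨appendMove_retrievesAt hr1, hr2, by rw [hρ1]; omega⟩
        · intro n s hret
          rcases appendMove_retrievesAt_elim hret with ⟨_, i', hi', _⟩ | hret'
          · exact absurd hi' (by simp)
          · exact hinv3 n s hret'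
        · rw [hρ1]
          omega
      | retrieve i =>
        rw [hmv] at hstepM
        obtain ⟨hnonempty, hconf'⟩ := hstepM
        have hρ1 : ρ (t + 1) = ρ t := by rw [hρsucc t, hmv]; simp [CRPMove.isReloc]
        obtain ⟨a, l, hl⟩ := List.exists_cons_of_ne_nil hnonempty
        have hamem : a ∈ M.conf t i := by rw [hl]; exact List.mem_cons_self
        have haN : 1 ≤ a ∧ a ≤ N := crp_conf_labels M (by omega : t ≤ T) hamem
        have hra : RetrievesAt M a (t + 1) :=
          ⟨by omega, ht, i, hmv, by rw [Nat.add_sub_cancel, hl]; rfl⟩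
        have hra' : r a = t + 1 := (hfeas.unique a (t + 1) haN.1 haN.2 hra).symm
        have hak : a = k + 1 := by
          have hiffa := hiff a haN.1 haN.2
          by_contra hne'
          have h2 : a ≤ k ∨ k + 2 ≤ a := by omega
          rcases h2 with h2 | h2
          · have := hiffa.2 h2
            omega
          · have hm := hrmono (k + 1) a (by omega) haN.2 (by omega)
            have := (hiff (k + 1) (by omega) (by omega)).1 (by omega)
            omega
        set t0 := max (T' + 1) (d a) with ht0def
        have hT't0 : T' < t0 := lt_of_lt_of_le (Nat.lt_succ_self T') (le_max_left _ _)
        have hstep' : CRPStep P (M'.conf T') (CRPMove.retrieve i) (M.conf (t + 1)) := by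
          rw [hcT]
          exact ⟨hnonempty, hconf'⟩
        have hhead : ((M'.conf T') i).head? = some a := by rw [hcT, hl]; rfl
        have ht0le : t0 ≤ d a + ρ t := by
          have hda1 : 1 ≤ d a := hd1 a haN.1 haN.2
          rcases Nat.eq_zero_or_pos k with hk | hk
          · rw [if_pos hk] at hinv5
            exact max_le (by omega) (by omega)
          · rw [if_neg (by omega : ¬ k = 0)] at hinv5
            have hdk : d k < d a := hdmono k a hk haN.2 (by omega)
            exact max_le (by omega) (by omega)
        refine ⟨t0, k + 1, appendMove M' t0 hT't0 (.retrieve i) (M.conf (t + 1)) hstep',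
          fun n => if n = a then t0 else r' n, ?_, ?_, ?_, by omega, ?_, ?_, ?_, ?_, ?_⟩
        · rw [appendMove_conf, appConf_le (Nat.zero_le _)]; exact hc0
        · rw [appendMove_conf, appConf_ge hT't0 le_rfl]
        · rw [appendMove_relocCount, hrc, hρ1]; simp [CRPMove.isReloc]
        · intro n h1 h2
          constructor
          · intro h
            by_cases hna : n = a
            · omega
            · have hrn : r n ≤ t := by
                by_contra hcon
                have hrn1 : r n = t + 1 := by omega
                rcases lt_or_gt_of_ne hna with hlt | hgt
                · have := hrmono n a h1 haN.2 hlt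
                  omega
                · have := hrmono a n haN.1 h2 hgt
                  omega
              have := (hiff n h1 h2).1 hrn
              omega
          · intro h
            by_cases hna : n = a
            · rw [hna, hra']
            · have hnk : n ≤ k := by omega
              have := (hiff n h1 h2).2 hnk
              omega
        · intro n h1 h2
          simp only []
          by_cases hna : n = a
          · rw [hna, if_pos rfl]
            refine ⟨⟨by omega, le_rfl, i, ?_, ?_⟩, le_max_right _ _, by rw [hρ1]; exact ht0le⟩
            · rw [appendMove_mv, appMv_self]
            · rw [appendMove_conf, appConf_pred hT't0]
              rw [hna] at *
              exact hhead
          · rw [if_neg hna]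
            have hnk : n ≤ k := by omega
            obtain ⟨hr1, hr2, hr3⟩ := hinv2 n h1 hnk
            exact ⟨appendMove_retrievesAt hr1, hr2, by rw [hρ1]; exact hr3⟩
        · intro n s hret
          rcases appendMove_retrievesAt_elim hret with ⟨hs, i', hi', hh'⟩ | hret'
          · injection hi' with hii
            subst hii
            rw [hhead] at hh'
            have hna : n = a := (Option.some_inj.mp hh').symm
            refine ⟨by omega, by omega, ?_⟩
            simp only []
            rw [if_pos hna, hs]
          · obtain ⟨h1, h2, h3⟩ := hinv3 n s hret'
            refine ⟨h1, by omega, ?_⟩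
            simp only []
            rw [if_neg (by omega : ¬ n = a)]
            exact h3
        · intro x y hx hy hxy
          simp only []
          by_cases hya : y = a
          · have hxa : ¬ x = a := by omega
            rw [if_pos hya, if_neg hxa]
            have hxk : x ≤ k := by omega
            obtain ⟨⟨_, hle, _⟩, _, _⟩ := hinv2 x hx hxk
            omega
          · have hyk : y ≤ k := by omega
            have hxa : ¬ x = a := by omega
            rw [if_neg hxa, if_neg hya]
            exact hinv4 x y hx hyk hxy
        · rw [hρ1, if_neg (by omega : ¬ k + 1 = 0), ← hak]
          exact ht0le
  obtain ⟨T', k, M', r', hc0, hcT, hrc, hkN, hiff, hinv2, hinv3, hinv4, hinv5⟩ := key T le_rfl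
  have hkN' : k = N := by
    have hN' := hiff N hN le_rfl
    have hrT : r N ≤ T := (hfeas.retrieves N hN le_rfl).2.1
    have := hN'.1 hrT
    omega
  have hρT : ρ T = relocCount M := rfl
  refine ⟨T', M', r', by rw [hc0, hconf0], ?_, ?_, ?_⟩
  · refine ⟨?_, ?_, ?_, ?_⟩
    · intro n h1 h2
      exact (hinv2 n h1 (by omega)).1
    · intro n s h1 h2 hret
      exact (hinv3 n s hret).2.2
    · intro n h1 h2
      exact (hinv2 n h1 (by omega)).2.1
    · intro n h1 h2
      have hsub : {n' | 1 ≤ n' ∧ n' ≤ N ∧ r' n' < r' n} ⊆ ↑(Finset.Icc 1 (n - 1)) := by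
        intro x hx
        simp only [Set.mem_setOf_eq] at hx
        simp only [Finset.coe_Icc, Set.mem_Icc]
        obtain ⟨hx1, hx2, hx3⟩ := hx
        refine ⟨hx1, ?_⟩
        by_contra hcon
        have hxn : n ≤ x := by omega
        rcases eq_or_lt_of_le hxn with heq | hlt
        · rw [← heq] at hx3
          exact absurd hx3 (lt_irrefl _)
        · have := hinv4 n x h1 (by omega) hlt
          omega
      have hfin : (↑(Finset.Icc 1 (n - 1)) : Set ℕ).Finite := (Finset.Icc 1 (n - 1)).finite_toSet
      have hle := Set.ncard_le_ncard hsub hfin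
      rw [Set.ncard_coe_finset, Nat.card_Icc] at hle
      omega
  · rw [hrc]
    exact hRC
  · intro n h1 h2
    have hb := (hinv2 n h1 (by omega)).2.2
    rw [hρT, hRC] at hb
    omega
end

section
/- In the abstract retrieval timeline, for every n ∈ {1,…,N} one has r(n) ≤ n + H + max(d(n) − n, 0); equivalently, the retrieval delay of container n satisfies r(n) − d(n) ≤ H + max(n − d(n), 0). -/
private lemma gap_aux (f : ℕ → ℕ) (N : ℕ)
    (hf : ∀ k k', 1 ≤ k → k' ≤ N → k < k' → f k < f k') :
    ∀ j k, 1 ≤ k → k + j ≤ N → f k + j ≤ f (k + j) := by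
  intro j
  induction j with
  | zero => intro k _ _; simp
  | succ j ih =>
    intro k hk hkN
    have h1 : f k + j ≤ f (k + j) := ih k hk (by omega)
    have h2 : f (k + j) < f (k + j + 1) :=
      hf (k + j) (k + j + 1) (by omega) (by omega) (by omega)
    have e : k + (j + 1) = k + j + 1 := rfl
    rw [e]
    omega

/-- abstract retrieval timeline.  Fix `N, H : ℕ` with `N ≥ 1`.
`d k` is the departure time and `r k` the retrieval time of container `k ∈ {1,…,N}`;
both are strictly increasing on `{1,…,N}`, `d 1 ≥ 1` and `d k ≤ r k`.
`Rel` is a finite set of positive time-steps (the relocation steps), disjoint from the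
retrieval times, of cardinality at most `H`.  A time-step `t ≥ 1` is idle if
`t ∉ Rel` and `t ≠ r k` for all `k ∈ {1,…,N}`; we assume that whenever some container is
available (`d k ≤ t ≤ r k` for some `k`), `t` is not idle.  Then for every
`n ∈ {1,…,N}` we have `r n ≤ n + H + max (d n − n) 0`, equivalently
`r n − d n ≤ H + max (n − d n) 0` (truncated `ℕ` subtraction realizes the `max` with 0). -/
theorem stmt3 (N H : ℕ) (hN : 1 ≤ N) (d r : ℕ → ℕ)
    (hd_mono : ∀ k k', 1 ≤ k → k' ≤ N → k < k' → d k < d k')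
    (hr_mono : ∀ k k', 1 ≤ k → k' ≤ N → k < k' → r k < r k')
    (hd1 : 1 ≤ d 1)
    (hdr : ∀ k, 1 ≤ k → k ≤ N → d k ≤ r k)
    (Rel : Finset ℕ)
    (hRel_pos : ∀ t ∈ Rel, 1 ≤ t)
    (hRel_disj : ∀ t ∈ Rel, ∀ k, 1 ≤ k → k ≤ N → r k ≠ t)
    (hRel_card : Rel.card ≤ H)
    (hno_idle : ∀ t, 1 ≤ t → (∃ k, 1 ≤ k ∧ k ≤ N ∧ d k ≤ t ∧ t ≤ r k) →
      ¬ (t ∉ Rel ∧ ∀ k, 1 ≤ k → k ≤ N → r k ≠ t)) :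
    ∀ n, 1 ≤ n → n ≤ N →
      r n ≤ n + H + (d n - n) ∧ r n - d n ≤ H + (n - d n) := by
  intro n hn1 hnN
  -- `k ≤ d k` for all relevant `k`
  have hdk_ge : ∀ k, 1 ≤ k → k ≤ N → k ≤ d k := by
    intro k hk hkN
    have h := gap_aux d N hd_mono (k - 1) 1 le_rfl (by omega)
    have hk1 : 1 + (k - 1) = k := by omega
    rw [hk1] at h
    omega
  -- positivity of retrieval times
  have hrpos : ∀ k, 1 ≤ k → k ≤ N → 1 ≤ r k := by
    intro k hk hkN
    have := hdk_ge k hk hkN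
    have := hdr k hk hkN
    omega
  -- the main inequality
  suffices hmain : r n ≤ n + H + (d n - n) by
    exact ⟨hmain, by omega⟩
  set T : Finset ℕ := Finset.Icc 1 (r n) with hT
  set Ret : Finset ℕ := (Finset.Icc 1 n).image r with hRet
  set RetAll : Finset ℕ := (Finset.Icc 1 N).image r with hRetAll
  set Idle : Finset ℕ := T \ (RetAll ∪ Rel) with hIdle
  have hIdleMem : ∀ t, t ∈ Idle ↔
      (1 ≤ t ∧ t ≤ r n) ∧ t ∉ Rel ∧ ∀ k, 1 ≤ k → k ≤ N → r k ≠ t := by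
    intro t
    constructor
    · intro h
      obtain ⟨hTm, hnot⟩ := Finset.mem_sdiff.mp h
      rw [Finset.mem_union] at hnot
      push_neg at hnot
      refine ⟨Finset.mem_Icc.mp hTm, hnot.2, ?_⟩
      intro k hk1 hkN hkt
      exact hnot.1 (Finset.mem_image.mpr ⟨k, Finset.mem_Icc.mpr ⟨hk1, hkN⟩, hkt⟩)
    · rintro ⟨hTm, hR, hret⟩
      refine Finset.mem_sdiff.mpr ⟨Finset.mem_Icc.mpr hTm, ?_⟩
      rw [Finset.mem_union]
      push_neg
      refine ⟨?_, hR⟩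
      intro hmem
      obtain ⟨k, hkIcc, hkt⟩ := Finset.mem_image.mp hmem
      have hk' := Finset.mem_Icc.mp hkIcc
      exact hret k hk'.1 hk'.2 hkt
  -- every time in T is a retrieval (of some k ≤ n), a relocation, or idle
  have hcover : T ⊆ Ret ∪ Rel ∪ Idle := by
    intro t ht
    have ht' : 1 ≤ t ∧ t ≤ r n := Finset.mem_Icc.mp ht
    by_cases hR : t ∈ Rel
    · exact Finset.mem_union_left _ (Finset.mem_union_right _ hR)
    · by_cases hret : ∃ k, 1 ≤ k ∧ k ≤ N ∧ r k = t
      · obtain ⟨k, hk1, hkN, hkt⟩ := hret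
        have hkn : k ≤ n := by
          by_contra hkn
          have := hr_mono n k hn1 hkN (by omega)
          omega
        refine Finset.mem_union_left _ (Finset.mem_union_left _ ?_)
        exact Finset.mem_image.mpr ⟨k, Finset.mem_Icc.mpr ⟨hk1, hkn⟩, hkt⟩
      · refine Finset.mem_union_right _ ?_
        refine (hIdleMem t).mpr ⟨ht', hR, ?_⟩
        intro k hk1 hkN hkt
        exact hret ⟨k, hk1, hkN, hkt⟩
  have hTcard : T.card = r n := by
    rw [hT, Nat.card_Icc]; omega
  have hRetcard : Ret.card ≤ n := by
    calc Ret.card ≤ (Finset.Icc 1 n).card := Finset.card_image_le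
    _ = n := by rw [Nat.card_Icc]; omega
  have hcount : r n ≤ n + H + Idle.card := by
    have h1 : T.card ≤ (Ret ∪ Rel ∪ Idle).card := Finset.card_le_card hcover
    have h2 : (Ret ∪ Rel ∪ Idle).card ≤ Ret.card + Rel.card + Idle.card := by
      calc (Ret ∪ Rel ∪ Idle).card ≤ (Ret ∪ Rel).card + Idle.card :=
            Finset.card_union_le _ _
      _ ≤ Ret.card + Rel.card + Idle.card := by
            have := Finset.card_union_le Ret Rel
            omega
    omega
  -- bound the number of idle times
  have hIdlecard : Idle.card ≤ d n - n := by
    rcases Idle.eq_empty_or_nonempty with hIe | hIne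
    · simp [hIe]
    · set t₀ : ℕ := Idle.max' hIne with ht₀
      have ht₀mem : t₀ ∈ Idle := Idle.max'_mem hIne
      obtain ⟨ht₀', ht₀Rel, ht₀ret⟩ := (hIdleMem t₀).mp ht₀mem
      -- t₀ is idle, so no container is available at t₀
      have hnoavail : ∀ k, 1 ≤ k → k ≤ N → ¬ (d k ≤ t₀ ∧ t₀ ≤ r k) := by
        intro k hk1 hkN hav
        exact hno_idle t₀ ht₀'.1 ⟨k, hk1, hkN, hav.1, hav.2⟩ ⟨ht₀Rel, ht₀ret⟩
      -- in particular t₀ < d n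
      have ht₀dn : t₀ < d n := by
        by_contra h
        exact hnoavail n hn1 hnN ⟨by omega, ht₀'.2⟩
      set M : Finset ℕ := (Finset.Icc 1 N).filter (fun k => d k ≤ t₀) with hM
      set RetM : Finset ℕ := M.image r with hRetM
      have hRetMcard : RetM.card = M.card := by
        apply Finset.card_image_of_injOn
        intro a ha b hb hab
        have ha' := Finset.mem_Icc.mp (Finset.mem_filter.mp ha).1
        have hb' := Finset.mem_Icc.mp (Finset.mem_filter.mp hb).1
        by_contra hne
        rcases lt_or_gt_of_ne hne with h | h
        · have := hr_mono a b ha'.1 hb'.2 h; omega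
        · have := hr_mono b a hb'.1 ha'.2 h; omega
      -- both Idle and RetM sit inside [1, t₀], and they are disjoint
      have hIdlesub : Idle ⊆ Finset.Icc 1 t₀ := by
        intro t ht
        have ht' := ((hIdleMem t).mp ht).1
        exact Finset.mem_Icc.mpr ⟨ht'.1, Finset.le_max' _ _ ht⟩
      have hRetMsub : RetM ⊆ Finset.Icc 1 t₀ := by
        intro x hx
        obtain ⟨k, hkM, hkx⟩ := Finset.mem_image.mp hx
        obtain ⟨hkIcc, hkd⟩ := Finset.mem_filter.mp hkM
        have hk' := Finset.mem_Icc.mp hkIcc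
        have hrk : r k < t₀ := by
          by_contra h
          exact hnoavail k hk'.1 hk'.2 ⟨hkd, by omega⟩
        have := hrpos k hk'.1 hk'.2
        exact Finset.mem_Icc.mpr ⟨by omega, by omega⟩
      have hdisj : Disjoint Idle RetM := by
        rw [Finset.disjoint_right]
        intro x hx hxI
        obtain ⟨k, hkM, hkx⟩ := Finset.mem_image.mp hx
        obtain ⟨hkIcc, _⟩ := Finset.mem_filter.mp hkM
        have hk' := Finset.mem_Icc.mp hkIcc
        exact ((hIdleMem x).mp hxI).2.2 k hk'.1 hk'.2 hkx
      have hsum : Idle.card + M.card ≤ t₀ := by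
        have h1 : (Idle ∪ RetM).card = Idle.card + RetM.card :=
          Finset.card_union_of_disjoint hdisj
        have h2 : (Idle ∪ RetM).card ≤ (Finset.Icc 1 t₀).card :=
          Finset.card_le_card (Finset.union_subset hIdlesub hRetMsub)
        rw [Nat.card_Icc] at h2
        omega
      -- lower bound on M.card
      have hMlb : n - (d n - t₀) ≤ M.card := by
        have hsub : Finset.Icc 1 (n - (d n - t₀)) ⊆ M := by
          intro k hk
          have hk' := Finset.mem_Icc.mp hk
          have hkn : k < n := by omega
          have hgap : d k + (n - k) ≤ d n := by
            have h := gap_aux d N hd_mono (n - k) k hk'.1 (by omega)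
            have : k + (n - k) = n := by omega
            rw [this] at h
            exact h
          refine Finset.mem_filter.mpr ⟨Finset.mem_Icc.mpr ⟨hk'.1, by omega⟩, ?_⟩
          omega
        calc n - (d n - t₀) = (Finset.Icc 1 (n - (d n - t₀))).card := by
              rw [Nat.card_Icc]; omega
        _ ≤ M.card := Finset.card_le_card hsub
      omega
  omega
end

section
/- In the abstract retrieval timeline (the hypothesis |Rel| ≤ H is not needed for this statement), for every n ∈ {1,…,N} the number of idle time-steps in {1,…,r(n)} is at most max(d(n) − n, 0); moreover, every idle time-step t with t ≤ r(n) satisfies t ≤ d(n) − 1. -/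
/-- abstract retrieval timeline; the bound `|Rel| ≤ H` is not needed and is
not assumed.  Fix `N : ℕ` with `N ≥ 1`.  `d k` is the departure time and `r k` the
retrieval time of container `k ∈ {1,…,N}`; both are strictly increasing on `{1,…,N}`,
`d 1 ≥ 1` and `d k ≤ r k`.  `Rel` is a finite set of positive time-steps (the relocation
steps), disjoint from the retrieval times.  A time-step `t ≥ 1` is idle if `t ∉ Rel` and
`t ≠ r k` for all `k ∈ {1,…,N}`; we assume that whenever some container is available
(`d k ≤ t ≤ r k` for some `k`), `t` is not idle.  Then for every `n ∈ {1,…,N}` the number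
of idle time-steps in `{1,…,r n}` is at most `max (d n − n) 0` (realized by truncated
`ℕ` subtraction `d n - n`), and moreover every idle time-step `t ≤ r n` satisfies
`t ≤ d n − 1`. -/
theorem stmt4 (N : ℕ) (hN : 1 ≤ N) (d r : ℕ → ℕ)
    (hd_mono : ∀ k k', 1 ≤ k → k' ≤ N → k < k' → d k < d k')
    (hr_mono : ∀ k k', 1 ≤ k → k' ≤ N → k < k' → r k < r k')
    (hd1 : 1 ≤ d 1)
    (hdr : ∀ k, 1 ≤ k → k ≤ N → d k ≤ r k)
    (Rel : Finset ℕ)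
    (hRel_pos : ∀ t ∈ Rel, 1 ≤ t)
    (hRel_disj : ∀ t ∈ Rel, ∀ k, 1 ≤ k → k ≤ N → r k ≠ t)
    (hno_idle : ∀ t, 1 ≤ t → (∃ k, 1 ≤ k ∧ k ≤ N ∧ d k ≤ t ∧ t ≤ r k) →
      ¬ (t ∉ Rel ∧ ∀ k, 1 ≤ k → k ≤ N → r k ≠ t)) :
    ∀ n, 1 ≤ n → n ≤ N →
      {t | 1 ≤ t ∧ t ≤ r n ∧ t ∉ Rel ∧ ∀ k, 1 ≤ k → k ≤ N → r k ≠ t}.ncard ≤ d n - n ∧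
      ∀ t, 1 ≤ t → t ≤ r n → t ∉ Rel → (∀ k, 1 ≤ k → k ≤ N → r k ≠ t) →
        t ≤ d n - 1 := by
  letI : DecidablePred (fun t => t ∉ Rel ∧ ∀ k, 1 ≤ k → k ≤ N → r k ≠ t) :=
    fun _ => Classical.propDecidable _
  -- d k ≥ k for k in range
  have hdk : ∀ n, 1 ≤ n → n ≤ N → n ≤ d n := by
    intro n h1 hn
    induction n with
    | zero => omega
    | succ m ih =>
      by_cases hm0 : m = 0
      · subst hm0; simpa using hd1
      · have hm1 : 1 ≤ m := by omega
        have h2 := ih hm1 (by omega)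
        have h3 := hd_mono m (m + 1) hm1 hn (by omega)
        omega
  -- key counting lemma: idle steps in [1, d n) number at most d n - n
  have key : ∀ n, 1 ≤ n → n ≤ N →
      ((Finset.Ico 1 (d n)).filter
        (fun t => t ∉ Rel ∧ ∀ k, 1 ≤ k → k ≤ N → r k ≠ t)).card ≤ d n - n := by
    intro n h1 hn
    induction n with
    | zero => omega
    | succ m ih =>
      by_cases hm0 : m = 0
      · subst hm0
        refine le_trans (Finset.card_filter_le _ _) ?_
        rw [Nat.card_Ico]
      · have hm1 : 1 ≤ m := by omega
        have hmN : m ≤ N := by omega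
        have hIH := ih hm1 hmN
        have hdm : d m < d (m + 1) := hd_mono m (m + 1) hm1 hn (by omega)
        have hmdm : m ≤ d m := hdk m hm1 hmN
        have hdm1 : 1 ≤ d m := by omega
        have hni : ¬ (d m ∉ Rel ∧ ∀ k, 1 ≤ k → k ≤ N → r k ≠ d m) :=
          hno_idle (d m) hdm1 ⟨m, hm1, hmN, le_refl _, hdr m hm1 hmN⟩
        have hsplit : Finset.Ico 1 (d (m + 1)) =
            Finset.Ico 1 (d m) ∪ Finset.Ico (d m) (d (m + 1)) :=
          (Finset.Ico_union_Ico_eq_Ico (by omega) (le_of_lt hdm)).symm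
        rw [hsplit, Finset.filter_union]
        have h2 : ((Finset.Ico (d m) (d (m + 1))).filter
            (fun t => t ∉ Rel ∧ ∀ k, 1 ≤ k → k ≤ N → r k ≠ t)).card
            ≤ d (m + 1) - (d m + 1) := by
          have hsub : (Finset.Ico (d m) (d (m + 1))).filter
              (fun t => t ∉ Rel ∧ ∀ k, 1 ≤ k → k ≤ N → r k ≠ t)
              ⊆ Finset.Ico (d m + 1) (d (m + 1)) := by
            intro t ht
            simp only [Finset.mem_filter, Finset.mem_Ico] at ht ⊢
            obtain ⟨⟨ht1, ht2⟩, ht3⟩ := ht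
            have : t ≠ d m := by
              intro hEq
              exact hni (hEq ▸ ht3)
            omega
          calc ((Finset.Ico (d m) (d (m + 1))).filter
                (fun t => t ∉ Rel ∧ ∀ k, 1 ≤ k → k ≤ N → r k ≠ t)).card
              ≤ (Finset.Ico (d m + 1) (d (m + 1))).card := Finset.card_le_card hsub
            _ = d (m + 1) - (d m + 1) := by rw [Nat.card_Ico]
        have h3 := Finset.card_union_le
          ((Finset.Ico 1 (d m)).filter
            (fun t => t ∉ Rel ∧ ∀ k, 1 ≤ k → k ≤ N → r k ≠ t))
          ((Finset.Ico (d m) (d (m + 1))).filter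
            (fun t => t ∉ Rel ∧ ∀ k, 1 ≤ k → k ≤ N → r k ≠ t))
        omega
  intro n h1 hn
  have hlt : ∀ t, 1 ≤ t → t ≤ r n → t ∉ Rel →
      (∀ k, 1 ≤ k → k ≤ N → r k ≠ t) → t < d n := by
    intro t ht htr hR hr'
    by_contra h
    exact hno_idle t ht ⟨n, h1, hn, by omega, htr⟩ ⟨hR, hr'⟩
  have hdn1 : 1 ≤ d n := by have := hdk n h1 hn; omega
  constructor
  · have hsub : {t | 1 ≤ t ∧ t ≤ r n ∧ t ∉ Rel ∧ ∀ k, 1 ≤ k → k ≤ N → r k ≠ t} ⊆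
        (((Finset.Ico 1 (d n)).filter
          (fun t => t ∉ Rel ∧ ∀ k, 1 ≤ k → k ≤ N → r k ≠ t)) : Finset ℕ) := by
      rintro t ⟨ht1, ht2, ht3, ht4⟩
      simp only [Finset.coe_filter, Set.mem_setOf_eq, Finset.mem_Ico]
      exact ⟨⟨ht1, hlt t ht1 ht2 ht3 ht4⟩, ht3, ht4⟩
    calc {t | 1 ≤ t ∧ t ≤ r n ∧ t ∉ Rel ∧ ∀ k, 1 ≤ k → k ≤ N → r k ≠ t}.ncard
        ≤ ((((Finset.Ico 1 (d n)).filter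
            (fun t => t ∉ Rel ∧ ∀ k, 1 ≤ k → k ≤ N → r k ≠ t)) : Finset ℕ) : Set ℕ).ncard :=
          Set.ncard_le_ncard hsub (Finset.finite_toSet _)
      _ = ((Finset.Ico 1 (d n)).filter
            (fun t => t ∉ Rel ∧ ∀ k, 1 ≤ k → k ≤ N → r k ≠ t)).card :=
          Set.ncard_coe_finset _
      _ ≤ d n - n := key n h1 hn
  · intro t ht htr hR hr'
    have := hlt t ht htr hR hr'
    omega
end

section
/- Consider the CRP model with a strictly increasing departure schedule d and no upper time windows, and suppose the set of FCFS-feasible sequences from the given initial configuration is nonempty. Then among the FCFS-feasible sequences whose relocation count equals the minimum relocation count, there exists a sequence M* with the following property: for every time-step t of M*, if some container is available at t, then the move of M* at time-step t is not idle. -/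
namespace Stmt5Aux

open Finset

variable {C P N T : ℕ}

/-- total number of occurrences of label `c` in configuration `b`. -/
def bcnt (b : CRPConfig C) (c : ℕ) : ℕ := ∑ i, ((b i).count c)

lemma count_head_tail {l : List ℕ} (h : l ≠ []) (c : ℕ) :
    l.count c = l.tail.count c + (if l.head! = c then 1 else 0) := by
  conv_lhs => rw [← List.cons_head!_tail h]
  simp [List.count_cons]

lemma step_bcnt_le {b b' : CRPConfig C} {mv : CRPMove C}
    (h : CRPStep P b mv b') (c : ℕ) : bcnt b' c ≤ bcnt b c := by
  cases mv with
  | idle =>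
      have h' : b' = b := h
      rw [h']
  | reloc i k =>
      obtain ⟨hik, hne, hlen, hb'⟩ := h
      subst hb'
      unfold bcnt
      have hk : k ∈ (univ : Finset (Fin C)).erase i := by
        simp [Ne.symm hik]
      rw [← Finset.add_sum_erase _ _ (mem_univ i), ← Finset.add_sum_erase _ _ hk]
      conv_rhs => rw [← Finset.add_sum_erase _ (fun j => (b j).count c) (mem_univ i),
        ← Finset.add_sum_erase _ (fun j => (b j).count c) hk]
      have hrest : ∑ x ∈ ((univ : Finset (Fin C)).erase i).erase k,
          ((fun j => if j = i then (b i).tail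
                    else if j = k then (b i).head! :: b k else b j) x).count c
          = ∑ x ∈ ((univ : Finset (Fin C)).erase i).erase k, (b x).count c := by
        apply Finset.sum_congr rfl
        intro x hx
        simp only [mem_erase] at hx
        simp [hx.1, hx.2.1]
      rw [hrest]
      simp only [if_pos rfl, if_neg (Ne.symm hik), ite_true]
      rw [count_head_tail hne c, List.count_cons]
      simp only [beq_iff_eq]
      split_ifs <;> omega
  | retrieve i =>
      obtain ⟨hne, hb'⟩ := h
      subst hb'
      unfold bcnt
      rw [← Finset.add_sum_erase _ _ (mem_univ i)]
      conv_rhs => rw [← Finset.add_sum_erase _ (fun j => (b j).count c) (mem_univ i)]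
      have hrest : ∑ x ∈ (univ : Finset (Fin C)).erase i,
          ((fun j => if j = i then (b i).tail else b j) x).count c
          = ∑ x ∈ (univ : Finset (Fin C)).erase i, (b x).count c := by
        apply Finset.sum_congr rfl
        intro x hx
        simp only [mem_erase] at hx
        simp [hx.1]
      rw [hrest]
      simp only [if_pos rfl, ite_true]
      rw [count_head_tail hne c]
      split_ifs <;> omega

lemma step_retrieve_bcnt_lt {b b' : CRPConfig C} {i : Fin C} {c : ℕ}
    (h : CRPStep P b (.retrieve i) b') (hc : (b i).head? = some c) :
    bcnt b' c < bcnt b c := by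
  obtain ⟨hne, hb'⟩ := h
  subst hb'
  unfold bcnt
  rw [← Finset.add_sum_erase _ _ (mem_univ i)]
  conv_rhs => rw [← Finset.add_sum_erase _ (fun j => (b j).count c) (mem_univ i)]
  have hrest : ∑ x ∈ (univ : Finset (Fin C)).erase i,
      ((fun j => if j = i then (b i).tail else b j) x).count c
      = ∑ x ∈ (univ : Finset (Fin C)).erase i, (b x).count c := by
    apply Finset.sum_congr rfl
    intro x hx
    simp only [mem_erase] at hx
    simp [hx.1]
  rw [hrest]
  simp only [if_pos rfl, ite_true]
  have hhd : (b i).head! = c := by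
    cases hl : b i with
    | nil => rw [hl] at hc; simp at hc
    | cons a l => rw [hl] at hc; simp at hc; simp [hc]
  rw [count_head_tail hne c, if_pos hhd]
  omega

lemma conf_bcnt_mono (M : CRPSeq C P N T) (c : ℕ) :
    ∀ u v, u ≤ v → v ≤ T → bcnt (M.conf v) c ≤ bcnt (M.conf u) c := by
  intro u v huv hvT
  induction v, huv using Nat.le_induction with
  | base => exact le_rfl
  | succ v hv ih =>
      have hstep := M.step (v + 1) (by omega) hvT
      have h1 : bcnt (M.conf (v + 1)) c ≤ bcnt (M.conf v) c := by
        have := step_bcnt_le hstep c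
        simpa using this
      exact le_trans h1 (ih (by omega))

lemma bcnt_init_le_one (M : CRPSeq C P N T) (c : ℕ) : bcnt (M.conf 0) c ≤ 1 := by
  by_cases h : ∃ i, c ∈ M.conf 0 i
  · obtain ⟨i, hi⟩ := h
    have he : bcnt (M.conf 0) c = (M.conf 0 i).count c := by
      apply Finset.sum_eq_single
      · intro j _ hj
        exact List.count_eq_zero.2 (M.init_disjoint i j (fun e => hj (e.symm)) c hi)
      · intro hni
        exact absurd (mem_univ i) hni
    rw [he]
    exact List.nodup_iff_count_le_one.1 (M.init_nodup i) c
  · push_neg at h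
    have he : bcnt (M.conf 0) c = 0 := by
      apply Finset.sum_eq_zero
      intro i _
      exact List.count_eq_zero.2 (h i)
    omega

lemma mem_bcnt_pos {b : CRPConfig C} {c : ℕ} {i : Fin C} (h : c ∈ b i) :
    1 ≤ bcnt b c := by
  have h1 : 1 ≤ (b i).count c := List.one_le_count_iff.2 h
  have h2 : (b i).count c ≤ bcnt b c :=
    Finset.single_le_sum (f := fun j => (b j).count c) (fun j _ => Nat.zero_le _) (mem_univ i)
  omega

lemma retrieve_bcnt_zero (M : CRPSeq C P N T) {n s : ℕ} (h : RetrievesAt M n s) :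
    ∀ u, s ≤ u → u ≤ T → bcnt (M.conf u) n = 0 := by
  obtain ⟨hs1, hsT, i, hmv, hhd⟩ := h
  have hstep := M.step s hs1 hsT
  rw [hmv] at hstep
  have hdrop : bcnt (M.conf s) n < bcnt (M.conf (s - 1)) n :=
    step_retrieve_bcnt_lt hstep hhd
  have hle : bcnt (M.conf (s - 1)) n ≤ 1 :=
    le_trans (conf_bcnt_mono M n 0 (s - 1) (Nat.zero_le _) (by omega)) (bcnt_init_le_one M n)
  intro u hu huT
  have hmono := conf_bcnt_mono M n s u hu huT
  omega

lemma mem_bounds (M : CRPSeq C P N T) {n u : ℕ} {i : Fin C}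
    (h : n ∈ M.conf u i) (huT : u ≤ T) : 1 ≤ n ∧ n ≤ N := by
  have h1 : 1 ≤ bcnt (M.conf u) n := mem_bcnt_pos h
  have h2 : bcnt (M.conf u) n ≤ bcnt (M.conf 0) n :=
    conf_bcnt_mono M n 0 u (Nat.zero_le _) huT
  have h3 : 1 ≤ bcnt (M.conf 0) n := le_trans h1 h2
  have h4 : ∃ j, 0 < (M.conf 0 j).count n := by
    by_contra hcon
    push_neg at hcon
    have hz : bcnt (M.conf 0) n = 0 :=
      Finset.sum_eq_zero (fun j _ => Nat.le_zero.mp (hcon j))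
    omega
  obtain ⟨j, hj⟩ := h4
  exact M.init_labels j n (List.count_pos_iff.1 hj)

lemma inBay_lt_retrieve (M : CRPSeq C P N T) {n s u : ℕ} {i : Fin C}
    (hr : RetrievesAt M n s) (hmem : n ∈ M.conf u i) (huT : u ≤ T) : u < s := by
  by_contra h
  push_neg at h
  have h0 := retrieve_bcnt_zero M hr u h huT
  have h1 := mem_bcnt_pos hmem
  omega

lemma retrieve_head_unique {M : CRPSeq C P N T} {a b s : ℕ}
    (ha : RetrievesAt M a s) (hb : RetrievesAt M b s) : a = b := by
  obtain ⟨_, _, i, hmv, hhd⟩ := ha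
  obtain ⟨_, _, i', hmv', hhd'⟩ := hb
  rw [hmv] at hmv'
  injection hmv' with hii
  rw [← hii] at hhd'
  rw [hhd] at hhd'
  exact Option.some_injective _ hhd'

lemma conf_idle_chain (M : CRPSeq C P N T) {a b : ℕ} (hab : a ≤ b) (hbT : b ≤ T)
    (hidle : ∀ s, a < s → s ≤ b → M.mv s = .idle) : M.conf b = M.conf a := by
  induction b, hab using Nat.le_induction with
  | base => rfl
  | succ b hb ih =>
      have hs := M.step (b + 1) (by omega) hbT
      rw [hidle (b + 1) (by omega) le_rfl] at hs
      have h1 : M.conf (b + 1) = M.conf b := by simpa [CRPStep] using hs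
      rw [h1]
      exact ih (by omega) (fun s hs1 hs2 => hidle s hs1 (by omega))

lemma r_lt {M : CRPSeq C P N T} {d : ℕ → ℕ} {r : ℕ → ℕ} (hF : CRPFeasible M d 0 r) :
    ∀ n, n ≤ N → ∀ k, 1 ≤ k → k < n → r k < r n := by
  intro n
  induction n using Nat.strong_induction_on with
  | _ n ih =>
    intro hnN k hk1 hkn
    have hknN : k ≤ N := by omega
    have hn1 : 1 ≤ n := by omega
    have hne : r k ≠ r n := by
      intro he
      have hra := hF.retrieves k hk1 hknN
      have hrb := hF.retrieves n hn1 hnN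
      rw [he] at hra
      exact absurd (retrieve_head_unique hra hrb) (by omega)
    by_contra hcon
    push_neg at hcon
    have hlt : r n < r k := by omega
    have hsub : ((insert n (Finset.Icc 1 (k - 1)) : Finset ℕ) : Set ℕ) ⊆
        {n' | 1 ≤ n' ∧ n' ≤ N ∧ r n' < r k} := by
      intro x hx
      simp only [Finset.coe_insert, Set.mem_insert_iff, Finset.coe_Icc, Set.mem_Icc] at hx
      rcases hx with rfl | ⟨hx1, hx2⟩
      · exact ⟨by omega, hnN, hlt⟩
      · exact ⟨hx1, by omega, ih k hkn hknN x hx1 (by omega)⟩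
    have hfin : {n' | 1 ≤ n' ∧ n' ≤ N ∧ r n' < r k}.Finite :=
      (Set.finite_Icc 1 N).subset (fun x hx => ⟨hx.1, hx.2.1⟩)
    have hcard := Set.ncard_le_ncard hsub hfin
    rw [Set.ncard_coe_finset, Finset.card_insert_of_notMem (by simp; omega),
      Nat.card_Icc] at hcard
    have hflex := hF.flex k hk1 hknN
    omega
lemma swap_lemma (M : CRPSeq C P N T) {d : ℕ → ℕ} {r : ℕ → ℕ}
    (hd : StrictSchedule N d) (hF : CRPFeasible M d 0 r)
    {t : ℕ} (ht1 : 1 ≤ t) (htT : t ≤ T) (hidle : M.mv t = .idle)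
    {m : ℕ} (hav : AvailableAt M d m t) :
    ∃ M' : CRPSeq C P N T, ∃ r', M'.conf 0 = M.conf 0 ∧ CRPFeasible M' d 0 r' ∧
      relocCount M' = relocCount M ∧
      (∀ s, s < t → M'.conf s = M.conf s) ∧
      (∀ s, s < t → M'.mv s = M.mv s) ∧ M'.mv t ≠ .idle := by
  classical
  obtain ⟨hm1, hmN, hdm, im, hmem⟩ := hav
  have hrm := hF.retrieves m hm1 hmN
  have hrm_gt : t - 1 < r m := inBay_lt_retrieve M hrm hmem (by omega)
  have hrm_ne_t : r m ≠ t := by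
    intro he
    obtain ⟨_, _, i, hmv, _⟩ := hrm
    rw [he, hidle] at hmv
    exact nomatch hmv
  have hrmt : t < r m := by omega
  have hrm_ne_idle : M.mv (r m) ≠ .idle := by
    obtain ⟨_, _, i, hmv, _⟩ := hrm
    rw [hmv]
    exact fun h => nomatch h
  have hexQ : ∃ s, t < s ∧ s ≤ T ∧ M.mv s ≠ CRPMove.idle :=
    ⟨r m, hrmt, hrm.2.1, hrm_ne_idle⟩
  obtain ⟨t', htt', ht'T, ht'ne, hmin⟩ :
      ∃ t', t < t' ∧ t' ≤ T ∧ M.mv t' ≠ CRPMove.idle ∧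
        ∀ s, t < s → s < t' → M.mv s = .idle := by
    obtain ⟨hf1, hf2, hf3⟩ := Nat.find_spec hexQ
    refine ⟨Nat.find hexQ, hf1, hf2, hf3, ?_⟩
    intro s hs1 hs2
    by_contra h
    have hle : Nat.find hexQ ≤ s := Nat.find_le ⟨hs1, by omega, h⟩
    omega
  have hconf_eq : M.conf (t' - 1) = M.conf (t - 1) := by
    apply conf_idle_chain M (by omega) (by omega)
    intro s h1 h2
    by_cases hst : s = t
    · rw [hst]; exact hidle
    · exact hmin s (by omega) (by omega)
  have hstep' : CRPStep P (M.conf (t - 1)) (M.mv t') (M.conf t') := by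
    have h := M.step t' (by omega) ht'T
    rwa [hconf_eq] at h
  set conf' : ℕ → CRPConfig C :=
    fun s => if t ≤ s ∧ s < t' then M.conf t' else M.conf s with hconf'def
  have hclt : ∀ s, s < t → conf' s = M.conf s := fun s hs => if_neg (by omega)
  have hcmid : ∀ s, t ≤ s → s < t' → conf' s = M.conf t' := fun s h1 h2 => if_pos ⟨h1, h2⟩
  have hcge : ∀ s, t' ≤ s → conf' s = M.conf s := fun s hs => if_neg (by omega)
  set mv' : ℕ → CRPMove C := fun s => M.mv (Equiv.swap t t' s) with hmv'def
  have htne : t ≠ t' := by omega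
  have hmvt : mv' t = M.mv t' := by
    simp only [hmv'def, Equiv.swap_apply_left]
  have hmvt' : mv' t' = M.mv t := by
    simp only [hmv'def, Equiv.swap_apply_right]
  have hmvo : ∀ s, s ≠ t → s ≠ t' → mv' s = M.mv s := fun s h1 h2 => by
    simp only [hmv'def, Equiv.swap_apply_of_ne_of_ne h1 h2]
  have hc0 : conf' 0 = M.conf 0 := hclt 0 (by omega)
  -- retrieval times of containers avoid [t, t')
  have hr_notmid : ∀ a, 1 ≤ a → a ≤ N → r a < t ∨ t' ≤ r a := by
    intro a ha1 haN
    obtain ⟨h1, h2, i, hmv, hh⟩ := hF.retrieves a ha1 haN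
    by_contra h
    push_neg at h
    obtain ⟨hge, hlt⟩ := h
    by_cases he : r a = t
    · rw [he, hidle] at hmv; exact nomatch hmv
    · rw [hmin (r a) (by omega) (by omega)] at hmv
      exact nomatch hmv
  have hr_ne_t : ∀ a, 1 ≤ a → a ≤ N → r a ≠ t := by
    intro a ha1 haN he
    obtain ⟨_, _, i, hmv, _⟩ := hF.retrieves a ha1 haN
    rw [he, hidle] at hmv
    exact nomatch hmv
  set r' : ℕ → ℕ := fun n => if r n = t' then t else r n with hr'def
  have hr_iff : ∀ a b, 1 ≤ a → a ≤ N → 1 ≤ b → b ≤ N → (r' a < r' b ↔ r a < r b) := by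
    intro a b ha1 haN hb1 hbN
    have Ha := hr_notmid a ha1 haN
    have Hb := hr_notmid b hb1 hbN
    simp only [hr'def]
    split_ifs with h1 h2 h2 <;> omega
  refine ⟨⟨conf', mv', ?_, ?_, ?_, ?_, ?_, ?_⟩, r', ?_, ?_, ?_, ?_, ?_, ?_⟩
  · rw [hc0]; exact M.init_height
  · rw [hc0]; exact M.init_labels
  · rw [hc0]; exact M.init_nodup
  · rw [hc0]; exact M.init_disjoint
  · rw [hc0]; exact M.init_all
  · -- step
    intro s hs1 hsT
    by_cases h1 : s < t
    · rw [hclt s h1, hclt (s - 1) (by omega), hmvo s (by omega) (by omega)]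
      exact M.step s hs1 hsT
    by_cases h2 : s = t
    · subst h2
      rw [hclt (s - 1) (by omega), hcmid s le_rfl htt', hmvt]
      exact hstep'
    by_cases h3 : s < t'
    · rw [hcmid (s - 1) (by omega) (by omega), hcmid s (by omega) h3,
        hmvo s h2 (by omega), hmin s (by omega) h3]
      exact rfl
    by_cases h4 : s = t'
    · subst h4
      rw [hcmid (s - 1) (by omega) (by omega), hcge s le_rfl, hmvt', hidle]
      exact rfl
    · rw [hcge (s - 1) (by omega), hcge s (by omega), hmvo s h2 h4]
      exact M.step s hs1 hsT
  · -- conf 0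
    exact hc0
  · -- feasibility
    refine ⟨?_, ?_, ?_, ?_⟩
    · -- retrieves
      intro n hn1 hnN
      obtain ⟨h1, h2, i, hmv, hh⟩ := hF.retrieves n hn1 hnN
      by_cases hc : r n = t'
      · have hr'n : r' n = t := if_pos hc
        rw [hr'n]
        refine ⟨ht1, htT, i, ?_, ?_⟩
        · show mv' t = CRPMove.retrieve i
          rw [hmvt, ← hc]; exact hmv
        · show (conf' (t - 1) i).head? = some n
          rw [hclt (t - 1) (by omega), ← hconf_eq, ← hc]
          exact hh
      · have hr'n : r' n = r n := if_neg hc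
        rw [hr'n]
        have hno : r n < t ∨ t' < r n := by
          have := hr_notmid n hn1 hnN
          omega
        refine ⟨h1, h2, i, ?_, ?_⟩
        · show mv' (r n) = CRPMove.retrieve i
          rw [hmvo (r n) (hr_ne_t n hn1 hnN) hc]; exact hmv
        · show (conf' (r n - 1) i).head? = some n
          rcases hno with hlt | hgt
          · rw [hclt (r n - 1) (by omega)]; exact hh
          · rw [hcge (r n - 1) (by omega)]; exact hh
    · -- unique
      intro n s hn1 hnN hret
      obtain ⟨hs1, hsT, i, hmv2, hh2⟩ := hret
      replace hmv2 : mv' s = CRPMove.retrieve i := hmv2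
      replace hh2 : (conf' (s - 1) i).head? = some n := hh2
      by_cases hst : s = t
      · have hmv3 : M.mv t' = CRPMove.retrieve i := by
          rw [← hmvt, ← hst]; exact hmv2
        have hh3 : (M.conf (t' - 1) i).head? = some n := by
          rw [hconf_eq]
          rw [hst] at hh2
          rw [← hclt (t - 1) (by omega)]
          exact hh2
        have hretM : RetrievesAt M n t' := ⟨by omega, ht'T, i, hmv3, hh3⟩
        have ht'r : t' = r n := hF.unique n t' hn1 hnN hretM
        have hr'n : r' n = t := if_pos ht'r.symm
        rw [hr'n]
        exact hst
      by_cases hst' : s = t'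
      · exfalso
        rw [hst', hmvt', hidle] at hmv2
        exact nomatch hmv2
      by_cases hmid : t < s ∧ s < t'
      · exfalso
        rw [hmvo s hst hst', hmin s hmid.1 hmid.2] at hmv2
        exact nomatch hmv2
      · have hcase : s < t ∨ t' < s := by omega
        rw [hmvo s hst hst'] at hmv2
        have hh3 : (M.conf (s - 1) i).head? = some n := by
          rcases hcase with hlt | hgt
          · rw [← hclt (s - 1) (by omega)]; exact hh2
          · rw [← hcge (s - 1) (by omega)]; exact hh2
        have hretM : RetrievesAt M n s := ⟨hs1, hsT, i, hmv2, hh3⟩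
        have hsr : s = r n := hF.unique n s hn1 hnN hretM
        have hr'n : r' n = r n := if_neg (by omega)
        rw [hr'n]
        exact hsr
    · -- onTime
      intro n hn1 hnN
      by_cases hc : r n = t'
      · have hr'n : r' n = t := if_pos hc
        rw [hr'n]
        obtain ⟨_, _, i, hmv, hh⟩ := hF.retrieves n hn1 hnN
        by_cases hnm : n = m
        · subst hnm; exact hdm
        · have hmem' : m ∈ M.conf (t' - 1) im := by rw [hconf_eq]; exact hmem
          have hrm2 := hF.retrieves m hm1 hmN
          have hlt1 : t' - 1 < r m := inBay_lt_retrieve M hrm2 hmem' (by omega)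
          have hrm_ne : r m ≠ t' := by
            intro he
            obtain ⟨_, _, i2, hmv2, hh2⟩ := hrm2
            rw [he] at hmv2 hh2
            rw [hc] at hmv hh
            rw [hmv] at hmv2
            injection hmv2 with hii
            rw [← hii] at hh2
            rw [hh] at hh2
            exact hnm (Option.some_injective _ hh2)
          have hrmgt : t' < r m := by omega
          have hnm_lt : n < m := by
            by_contra hge
            push_neg at hge
            have hmn : m < n := by omega
            have := r_lt hF n hnN m hm1 hmn
            omega
          have hdd : d n < d m := hd.2 n m hn1 hmN hnm_lt
          omega
      · have hr'n : r' n = r n := if_neg hc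
        rw [hr'n]
        exact hF.onTime n hn1 hnN
    · -- flex
      intro n hn1 hnN
      have hset : {n' | 1 ≤ n' ∧ n' ≤ N ∧ r' n' < r' n} =
          {n' | 1 ≤ n' ∧ n' ≤ N ∧ r n' < r n} := by
        ext x
        simp only [Set.mem_setOf_eq]
        constructor
        · rintro ⟨a1, a2, a3⟩
          exact ⟨a1, a2, (hr_iff x n a1 a2 hn1 hnN).1 a3⟩
        · rintro ⟨a1, a2, a3⟩
          exact ⟨a1, a2, (hr_iff x n a1 a2 hn1 hnN).2 a3⟩
      rw [hset]
      exact hF.flex n hn1 hnN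
  · -- relocCount
    show ((Finset.Icc 1 T).filter (fun s => (mv' s).isReloc = true)).card =
      ((Finset.Icc 1 T).filter (fun s => (M.mv s).isReloc = true)).card
    have hswapIcc : ∀ a, a ∈ Finset.Icc 1 T → Equiv.swap t t' a ∈ Finset.Icc 1 T := by
      intro a ha
      by_cases h1 : a = t
      · subst h1; rw [Equiv.swap_apply_left]; simp only [Finset.mem_Icc]; omega
      by_cases h2 : a = t'
      · subst h2; rw [Equiv.swap_apply_right]; simp only [Finset.mem_Icc]; omega
      · rw [Equiv.swap_apply_of_ne_of_ne h1 h2]; exact ha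
    apply Finset.card_bij' (i := fun a _ => Equiv.swap t t' a) (j := fun a _ => Equiv.swap t t' a)
    · intro a ha
      simp only [Finset.mem_filter] at ha ⊢
      exact ⟨hswapIcc a ha.1, ha.2⟩
    · intro a ha
      simp only [Finset.mem_filter] at ha ⊢
      refine ⟨hswapIcc a ha.1, ?_⟩
      show (mv' (Equiv.swap t t' a)).isReloc = true
      simp only [hmv'def, Equiv.swap_apply_self]
      exact ha.2
    · intro a ha
      exact Equiv.swap_apply_self _ _ _
    · intro a ha
      exact Equiv.swap_apply_self _ _ _
  · exact fun s hs => hclt s hs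
  · exact fun s hs => hmvo s (by omega) (by omega)
  · show mv' t ≠ CRPMove.idle
    rw [hmvt]; exact ht'ne
end Stmt5Aux

open Stmt5Aux in
/-- with a strictly increasing departure schedule `d` and no upper time
windows, suppose the set of FCFS-feasible sequences from the initial configuration `b0`
is nonempty.  Then among the FCFS-feasible sequences whose relocation count equals the
minimum relocation count `sInf (FCFSRelocSet C P N d b0)`, there is a sequence `M*` such
that for every time-step `t` of `M*`, if some container is available at `t`, then the
move of `M*` at `t` is not idle. -/
theorem stmt5 (C P N : ℕ) (hN : 1 ≤ N) (d : ℕ → ℕ) (hd : StrictSchedule N d)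
    (b0 : CRPConfig C)
    (hne : ∃ T, ∃ M : CRPSeq C P N T, ∃ r, M.conf 0 = b0 ∧ CRPFeasible M d 0 r) :
    ∃ T, ∃ M : CRPSeq C P N T, ∃ r, M.conf 0 = b0 ∧ CRPFeasible M d 0 r ∧
      relocCount M = sInf (FCFSRelocSet C P N d b0) ∧
      ∀ t, 1 ≤ t → t ≤ T → (∃ n, AvailableAt M d n t) → M.mv t ≠ CRPMove.idle := by
  have hne' : (FCFSRelocSet C P N d b0).Nonempty := by
    obtain ⟨T, M, r, h1, h2⟩ := hne
    exact ⟨relocCount M, T, M, r, h1, h2, rfl⟩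
  obtain ⟨T0, M0, r0, hc0, hF0, hR0⟩ := Nat.sInf_mem hne'
  suffices h : ∀ k, ∃ M : CRPSeq C P N T0, ∃ r, M.conf 0 = b0 ∧ CRPFeasible M d 0 r ∧
      relocCount M = sInf (FCFSRelocSet C P N d b0) ∧
      ∀ s, 1 ≤ s → s ≤ T0 → s ≤ k → (∃ n, AvailableAt M d n s) → M.mv s ≠ .idle by
    obtain ⟨M, r, h1, h2, h3, h4⟩ := h T0
    exact ⟨T0, M, r, h1, h2, h3, fun t a b c => h4 t a b b c⟩
  intro k
  induction k with
  | zero => exact ⟨M0, r0, hc0, hF0, hR0, fun s h1 h2 h3 => by omega⟩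
  | succ k ih =>
    obtain ⟨M, r, h1, h2, h3, h4⟩ := ih
    by_cases hT : k + 1 ≤ T0
    · by_cases hid : M.mv (k + 1) = .idle
      · by_cases hav : ∃ n, AvailableAt M d n (k + 1)
        · obtain ⟨m, hm⟩ := hav
          obtain ⟨M', r', hc', hF', hR', hcons, hmvs, hmvt⟩ :=
            swap_lemma M hd h2 (by omega) hT hid hm
          refine ⟨M', r', by rw [hc']; exact h1, hF', by rw [hR']; exact h3, ?_⟩
          intro s hs1 hsT0 hsk hava
          by_cases hs : s = k + 1
          · rw [hs]; exact hmvt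
          · have hsk' : s < k + 1 := by omega
            rw [hmvs s hsk']
            apply h4 s hs1 hsT0 (by omega)
            obtain ⟨n, hn1, hnN, hdn, i, hin⟩ := hava
            refine ⟨n, hn1, hnN, hdn, i, ?_⟩
            rw [← hcons (s - 1) (by omega)]
            exact hin
        · refine ⟨M, r, h1, h2, h3, ?_⟩
          intro s hs1 hsT0 hsk hava
          by_cases hs : s = k + 1
          · exact absurd (hs ▸ hava) hav
          · exact h4 s hs1 hsT0 (by omega) hava
      · refine ⟨M, r, h1, h2, h3, ?_⟩
        intro s hs1 hsT0 hsk hava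
        by_cases hs : s = k + 1
        · rw [hs]; exact hid
        · exact h4 s hs1 hsT0 (by omega) hava
    · exact ⟨M, r, h1, h2, h3, fun s hs1 hsT0 hsk hava => h4 s hs1 hsT0 (by omega) hava⟩
end

section
/- Consider the CRP model with a strictly increasing departure schedule d and no upper time windows. For every FCFS-feasible sequence M there exists an FCFS-feasible sequence M' from the same initial configuration such that: the relocation count of M' equals the relocation count of M; every container is retrieved in M' no later than in M (r'(n) ≤ r(n) for all n); and for every time-step t of M', if some container is available at t then the move of M' at t is not idle. -/
/-! ### Auxiliary machinery for STATEMENT 6 -/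

section Stmt6Aux

/-- Whether a move is idle. -/
def CRPMove.isIdle {C : ℕ} : CRPMove C → Bool
  | .idle => true
  | _ => false

lemma isIdle_false {C : ℕ} {m : CRPMove C} (h : m ≠ CRPMove.idle) : m.isIdle = false := by
  cases m with
  | idle => exact absurd rfl h
  | reloc a b => rfl
  | retrieve a => rfl

/-- The termination measure: sum of the positions of the non-idle moves. -/
def crpMeasure {C P N T : ℕ} (M : CRPSeq C P N T) : ℕ :=
  ∑ s ∈ Finset.Icc 1 T, (if (M.mv s).isIdle = true then 0 else s)

lemma retrieval_unique_container {C P N T : ℕ} {M : CRPSeq C P N T} {n n' t : ℕ}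
    (h : RetrievesAt M n t) (h' : RetrievesAt M n' t) : n = n' := by
  obtain ⟨_, _, i, hi, hh⟩ := h
  obtain ⟨_, _, i', hi', hh'⟩ := h'
  rw [hi] at hi'
  injection hi' with he
  subst he
  rw [hh] at hh'
  exact Option.some.inj hh'

lemma r_mono {C P N T : ℕ} {d : ℕ → ℕ} {r : ℕ → ℕ} {M : CRPSeq C P N T}
    (hM : CRPFeasible M d 0 r) :
    ∀ k m, 1 ≤ m → m < k → k ≤ N → r m < r k := by
  intro k
  induction k using Nat.strong_induction_on with
  | _ k ih =>
    intro m hm1 hmk hkN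
    have hk2 : 2 ≤ k := by omega
    have hstep : r (k - 1) < r k := by
      rcases lt_trichotomy (r (k - 1)) (r k) with h | h | h
      · exact h
      · exfalso
        have h1 := hM.retrieves (k - 1) (by omega) (by omega)
        rw [h] at h1
        have := retrieval_unique_container h1 (hM.retrieves k (by omega) hkN)
        omega
      · exfalso
        have hf := hM.flex (k - 1) (by omega) (by omega)
        have hsub : ↑(insert k (Finset.Icc 1 (k - 2))) ⊆
            {n' | 1 ≤ n' ∧ n' ≤ N ∧ r n' < r (k - 1)} := by
          intro a ha
          simp only [Finset.coe_insert, Set.mem_insert_iff, Finset.coe_Icc, Set.mem_Icc] at ha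
          rcases ha with rfl | ⟨ha1, ha2⟩
          · exact ⟨by omega, hkN, h⟩
          · exact ⟨ha1, by omega, ih (k - 1) (by omega) a ha1 (by omega) (by omega)⟩
        have hfin : {n' | 1 ≤ n' ∧ n' ≤ N ∧ r n' < r (k - 1)}.Finite :=
          Set.Finite.subset (Set.finite_Icc 1 N) (fun a ha => Set.mem_Icc.2 ⟨ha.1, ha.2.1⟩)
        have hcard := Set.ncard_le_ncard hsub hfin
        rw [Set.ncard_coe_finset] at hcard
        have hkn : k ∉ Finset.Icc 1 (k - 2) := by simp only [Finset.mem_Icc]; omega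
        rw [Finset.card_insert_of_notMem hkn, Nat.card_Icc] at hcard
        omega
    rcases Nat.lt_or_ge m (k - 1) with h | h
    · exact lt_trans (ih (k - 1) (by omega) m hm1 h (by omega)) hstep
    · have hm : m = k - 1 := by omega
      rw [hm]; exact hstep

lemma step_mem {C P : ℕ} {b b' : CRPConfig C} {m : CRPMove C} (h : CRPStep P b m b')
    {n : ℕ} {j : Fin C} (hm : n ∈ b' j) : ∃ j', n ∈ b j' := by
  cases m with
  | idle =>
    have hb : b' = b := h
    rw [hb] at hm; exact ⟨j, hm⟩
  | reloc i k =>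
    obtain ⟨hik, hne, _, rfl⟩ := h
    have hm' : n ∈ (if j = i then (b i).tail else if j = k then (b i).head! :: b k else b j) := hm
    by_cases h1 : j = i
    · rw [if_pos h1] at hm'; exact ⟨i, List.mem_of_mem_tail hm'⟩
    · by_cases h2 : j = k
      · rw [if_neg h1, if_pos h2] at hm'
        rcases List.mem_cons.1 hm' with rfl | hmk
        · exact ⟨i, List.head!_mem_self hne⟩
        · exact ⟨k, hmk⟩
      · rw [if_neg h1, if_neg h2] at hm'; exact ⟨j, hm'⟩
  | retrieve i =>
    obtain ⟨hne, rfl⟩ := h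
    have hm' : n ∈ (if j = i then (b i).tail else b j) := hm
    by_cases h1 : j = i
    · rw [if_pos h1] at hm'; exact ⟨i, List.mem_of_mem_tail hm'⟩
    · rw [if_neg h1] at hm'; exact ⟨j, hm'⟩

lemma step_bayInv {C P : ℕ} {b b' : CRPConfig C} {m : CRPMove C} (h : CRPStep P b m b')
    (hnd : ∀ i, (b i).Nodup) (hdisj : ∀ i j, i ≠ j → ∀ c, c ∈ b i → c ∉ b j) :
    (∀ i, (b' i).Nodup) ∧ (∀ i j, i ≠ j → ∀ c, c ∈ b' i → c ∉ b' j) := by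
  cases m with
  | idle =>
    have hb : b' = b := h
    rw [hb]; exact ⟨hnd, hdisj⟩
  | reloc i k =>
    obtain ⟨hik, hne, _, rfl⟩ := h
    have hmem : ∀ j c,
        c ∈ (if j = i then (b i).tail else if j = k then (b i).head! :: b k else b j) →
        (j = i ∧ c ∈ (b i).tail) ∨ (j = k ∧ (c = (b i).head! ∨ c ∈ b k)) ∨
          (j ≠ i ∧ j ≠ k ∧ c ∈ b j) := by
      intro j c hc
      by_cases h1 : j = i
      · rw [if_pos h1] at hc; exact Or.inl ⟨h1, hc⟩
      · by_cases h2 : j = k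
        · rw [if_neg h1, if_pos h2] at hc; exact Or.inr (Or.inl ⟨h2, List.mem_cons.1 hc⟩)
        · rw [if_neg h1, if_neg h2] at hc; exact Or.inr (Or.inr ⟨h1, h2, hc⟩)
    have hhead : (b i).head! ∈ b i := List.head!_mem_self hne
    have hht : (b i).head! ∉ (b i).tail := by
      have hnd' := hnd i
      rw [← List.cons_head!_tail hne] at hnd'
      exact (List.nodup_cons.1 hnd').1
    have htsub : ∀ c, c ∈ (b i).tail → c ∈ b i := fun c hc => List.mem_of_mem_tail hc
    constructor
    · intro j
      have : ((fun j => if j = i then (b i).tail else if j = k then (b i).head! :: b k else b j) j)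
          = (if j = i then (b i).tail else if j = k then (b i).head! :: b k else b j) := rfl
      rw [this]
      by_cases h1 : j = i
      · rw [if_pos h1]; exact (hnd i).tail
      · by_cases h2 : j = k
        · rw [if_neg h1, if_pos h2]
          exact List.nodup_cons.2 ⟨fun hmem' => hdisj i k hik _ hhead hmem', hnd k⟩
        · rw [if_neg h1, if_neg h2]; exact hnd j
    · intro j j' hjj' c hcj hcj'
      replace hcj := hmem j c hcj
      replace hcj' := hmem j' c hcj'
      rcases hcj with ⟨hj, hc⟩ | ⟨hj, hc⟩ | ⟨hj1, hj2, hc⟩ <;>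
        rcases hcj' with ⟨hj', hc'⟩ | ⟨hj', hc'⟩ | ⟨hj'1, hj'2, hc'⟩
      · exact hjj' (hj.trans hj'.symm)
      · rcases hc' with hch | hck
        · rw [hch] at hc; exact hht hc
        · exact hdisj i k hik c (htsub c hc) hck
      · exact hdisj i j' (Ne.symm hj'1) c (htsub c hc) hc'
      · rcases hc with hch | hck
        · rw [hch] at hc'; exact hht hc'
        · exact hdisj k i (Ne.symm hik) c hck (htsub c hc')
      · exact hjj' (hj.trans hj'.symm)
      · rcases hc with hch | hck
        · rw [hch] at hc'; exact hdisj i j' (Ne.symm hj'1) _ hhead hc'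
        · exact hdisj k j' (Ne.symm hj'2) c hck hc'
      · exact hdisj j i hj1 c hc (htsub c hc')
      · rcases hc' with hch | hck
        · exact hdisj i j (Ne.symm hj1) c (by rw [hch]; exact hhead) hc
        · exact hdisj j k hj2 c hc hck
      · exact hdisj j j' hjj' c hc hc'
  | retrieve i =>
    obtain ⟨hne, rfl⟩ := h
    have hsub : ∀ j c, c ∈ (if j = i then (b i).tail else b j) → c ∈ b j := by
      intro j c hc
      by_cases h1 : j = i
      · rw [if_pos h1] at hc; rw [h1]; exact List.mem_of_mem_tail hc
      · rwa [if_neg h1] at hc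
    constructor
    · intro j
      have : ((fun j => if j = i then (b i).tail else b j) j)
          = (if j = i then (b i).tail else b j) := rfl
      rw [this]
      by_cases h1 : j = i
      · rw [if_pos h1]; exact (hnd i).tail
      · rw [if_neg h1]; exact hnd j
    · intro j j' hjj' c hcj hcj'
      exact hdisj j j' hjj' c (hsub j c hcj) (hsub j' c hcj')

lemma step_retrieve_gone {C P : ℕ} {b b' : CRPConfig C} {i : Fin C} {n : ℕ}
    (h : CRPStep P b (CRPMove.retrieve i) b') (hh : (b i).head? = some n)
    (hnd : ∀ j, (b j).Nodup) (hdisj : ∀ j j', j ≠ j' → ∀ c, c ∈ b j → c ∉ b j') :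
    ∀ j, n ∉ b' j := by
  obtain ⟨hne, rfl⟩ := h
  have hcons : b i = n :: (b i).tail := List.eq_cons_of_mem_head? hh
  intro j hmem
  have hmem' : n ∈ (if j = i then (b i).tail else b j) := hmem
  by_cases h1 : j = i
  · rw [if_pos h1] at hmem'
    have hnd' := hnd i
    rw [hcons] at hnd'
    exact (List.nodup_cons.1 hnd').1 hmem'
  · rw [if_neg h1] at hmem'
    exact hdisj i j (fun he => h1 he.symm) n (by rw [hcons]; exact List.mem_cons_self) hmem'

lemma bayInv_at {C P N T : ℕ} (M : CRPSeq C P N T) : ∀ s, s ≤ T →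
    (∀ i, (M.conf s i).Nodup) ∧ ∀ i j, i ≠ j → ∀ c, c ∈ M.conf s i → c ∉ M.conf s j := by
  intro s
  induction s with
  | zero => intro _; exact ⟨M.init_nodup, M.init_disjoint⟩
  | succ s ih =>
    intro hsT
    have hstep := M.step (s + 1) (by omega) hsT
    rw [Nat.add_sub_cancel] at hstep
    exact step_bayInv hstep (ih (by omega)).1 (ih (by omega)).2

lemma retrieved_gone {C P N T : ℕ} (M : CRPSeq C P N T) {n s : ℕ} (hn : RetrievesAt M n s) :
    ∀ u, s ≤ u → u ≤ T → ∀ j, n ∉ M.conf u j := by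
  obtain ⟨hs1, hsT, i, hmv, hh⟩ := hn
  intro u
  induction u with
  | zero => intro h _; exact absurd h (by omega)
  | succ u ih =>
    intro hsu huT j hmem
    rcases Nat.lt_or_ge s (u + 1) with hlt | hge
    · have hstep := M.step (u + 1) (by omega) huT
      rw [Nat.add_sub_cancel] at hstep
      obtain ⟨j', hj'⟩ := step_mem hstep hmem
      exact ih (by omega) (by omega) j' hj'
    · have hs' : s = u + 1 := by omega
      subst hs'
      have hstep := M.step (u + 1) (by omega) huT
      rw [Nat.add_sub_cancel] at hstep
      rw [hmv] at hstep
      have hh' : (M.conf u i).head? = some n := by rwa [Nat.add_sub_cancel] at hh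
      have hbi := bayInv_at M u (by omega)
      exact step_retrieve_gone hstep hh' hbi.1 hbi.2 j hmem

lemma inbay_le_r {C P N T : ℕ} {d : ℕ → ℕ} {m : ℕ} {r : ℕ → ℕ} {M : CRPSeq C P N T}
    (hM : CRPFeasible M d m r) {n t : ℕ} (h1 : 1 ≤ n) (h2 : n ≤ N)
    (hin : InBay M n t) (htT : t ≤ T) : t ≤ r n := by
  by_contra hlt
  push_neg at hlt
  have hr1 : 1 ≤ r n := (hM.retrieves n h1 h2).1
  obtain ⟨i, hi⟩ := hin
  exact retrieved_gone M (hM.retrieves n h1 h2) (t - 1) (by omega) (by omega) i hi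

/-- The configuration sequence after swapping an idle step at `t` with the move at `t'`. -/
def swapConf {C P N T : ℕ} (M : CRPSeq C P N T) (t t' : ℕ) : ℕ → CRPConfig C :=
  fun s => if t ≤ s ∧ s < t' then M.conf t' else M.conf s

/-- The move sequence after swapping an idle step at `t` with the move at `t'`. -/
def swapMv {C P N T : ℕ} (M : CRPSeq C P N T) (t t' : ℕ) : ℕ → CRPMove C :=
  fun s => if s = t then M.mv t' else if s = t' then CRPMove.idle else M.mv s

lemma swapConf_lt {C P N T : ℕ} (M : CRPSeq C P N T) {t t' s : ℕ} (h : s < t) :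
    swapConf M t t' s = M.conf s := by
  unfold swapConf; rw [if_neg (by omega)]

lemma swapConf_mid {C P N T : ℕ} (M : CRPSeq C P N T) {t t' s : ℕ} (h1 : t ≤ s) (h2 : s < t') :
    swapConf M t t' s = M.conf t' := by
  unfold swapConf; rw [if_pos ⟨h1, h2⟩]

lemma swapConf_ge {C P N T : ℕ} (M : CRPSeq C P N T) {t t' s : ℕ} (h : t' ≤ s) :
    swapConf M t t' s = M.conf s := by
  unfold swapConf; rw [if_neg (by omega)]

lemma swapMv_eq_t {C P N T : ℕ} (M : CRPSeq C P N T) {t t' : ℕ} :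
    swapMv M t t' t = M.mv t' := by
  unfold swapMv; rw [if_pos rfl]

lemma swapMv_eq_t' {C P N T : ℕ} (M : CRPSeq C P N T) {t t' : ℕ} (h : t' ≠ t) :
    swapMv M t t' t' = CRPMove.idle := by
  unfold swapMv; rw [if_neg h, if_pos rfl]

lemma swapMv_other {C P N T : ℕ} (M : CRPSeq C P N T) {t t' s : ℕ} (h1 : s ≠ t) (h2 : s ≠ t') :
    swapMv M t t' s = M.mv s := by
  unfold swapMv; rw [if_neg h1, if_neg h2]

lemma conf_const {C P N T : ℕ} (M : CRPSeq C P N T) {t t' : ℕ} (ht1 : 1 ≤ t) (ht'T : t' ≤ T)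
    (hidle : ∀ s, t ≤ s → s < t' → M.mv s = CRPMove.idle) :
    ∀ u, t - 1 ≤ u → u ≤ t' - 1 → M.conf u = M.conf (t - 1) := by
  intro u
  induction u with
  | zero =>
    intro h _
    have h0 : t - 1 = 0 := by omega
    rw [h0]
  | succ u ih =>
    intro h1 h2
    rcases Nat.lt_or_ge u (t - 1) with h | h
    · have h0 : t - 1 = u + 1 := by omega
      rw [h0]
    · have ht'2 : 2 ≤ t' := by omega
      have hstep := M.step (u + 1) (by omega) (by omega)
      have hidle' : M.mv (u + 1) = CRPMove.idle := hidle (u + 1) (by omega) (by omega)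
      rw [hidle'] at hstep
      have heq : M.conf (u + 1) = M.conf (u + 1 - 1) := hstep
      rw [Nat.add_sub_cancel] at heq
      rw [heq]
      exact ih h (by omega)

/-- Swapping an idle step at `t` with the (non-idle) move at `t'`, when all moves in
`[t, t')` are idle, yields a valid move sequence. -/
def swapSeq {C P N T : ℕ} (M : CRPSeq C P N T) (t t' : ℕ) (ht1 : 1 ≤ t) (htt' : t < t')
    (ht'T : t' ≤ T) (hidle : ∀ s, t ≤ s → s < t' → M.mv s = CRPMove.idle) :
    CRPSeq C P N T where
  conf := swapConf M t t'
  mv := swapMv M t t'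
  init_height := by
    intro i; rw [swapConf_lt M (show (0:ℕ) < t by omega)]; exact M.init_height i
  init_labels := by
    intro i; rw [swapConf_lt M (show (0:ℕ) < t by omega)]; exact M.init_labels i
  init_nodup := by
    intro i; rw [swapConf_lt M (show (0:ℕ) < t by omega)]; exact M.init_nodup i
  init_disjoint := by
    intro i j hij; rw [swapConf_lt M (show (0:ℕ) < t by omega)]
    exact M.init_disjoint i j hij
  init_all := by
    intro n h1 h2; rw [swapConf_lt M (show (0:ℕ) < t by omega)]
    exact M.init_all n h1 h2
  step := by
    intro s hs1 hsT
    rcases lt_trichotomy s t with hst | heq | hst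
    · rw [swapConf_lt M (show s - 1 < t by omega), swapConf_lt M hst,
        swapMv_other M (by omega) (by omega)]
      exact M.step s hs1 hsT
    · rw [heq]
      rw [swapConf_lt M (show t - 1 < t by omega), swapConf_mid M (le_refl t) htt',
        swapMv_eq_t M]
      have hc : M.conf (t' - 1) = M.conf (t - 1) :=
        conf_const M ht1 ht'T hidle (t' - 1) (by omega) (le_refl _)
      rw [← hc]
      exact M.step t' (by omega) ht'T
    · rcases lt_trichotomy s t' with hst' | heq' | hst'
      · rw [swapConf_mid M (show t ≤ s - 1 by omega) (show s - 1 < t' by omega),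
          swapConf_mid M (by omega) hst', swapMv_other M (by omega) (by omega),
          hidle s (by omega) hst']
        exact rfl
      · rw [heq', swapConf_mid M (show t ≤ t' - 1 by omega) (show t' - 1 < t' by omega),
          swapConf_ge M (le_refl t'), swapMv_eq_t' M (by omega)]
        exact rfl
      · rw [swapConf_ge M (show t' ≤ s - 1 by omega), swapConf_ge M (by omega),
          swapMv_other M (by omega) (by omega)]
        exact M.step s hs1 hsT

/-- The adjusted retrieval times. -/
def swapR (r : ℕ → ℕ) (t t' : ℕ) : ℕ → ℕ := fun n => if r n = t' then t else r n

lemma swapR_pos {r : ℕ → ℕ} {t t' n : ℕ} (h : r n = t') : swapR r t t' n = t := by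
  unfold swapR; rw [if_pos h]

lemma swapR_neg {r : ℕ → ℕ} {t t' n : ℕ} (h : r n ≠ t') : swapR r t t' n = r n := by
  unfold swapR; rw [if_neg h]

lemma sum_swap_core {A : Finset ℕ} {t t' : ℕ} (ht : t ∈ A) (ht' : t' ∈ A) (hne : t ≠ t')
    (f g : ℕ → ℕ) (hfg : ∀ s ∈ A, s ≠ t → s ≠ t' → f s = g s)
    {ft ft' gt gt' : ℕ} (hft : f t = ft) (hft' : f t' = ft') (hgt : g t = gt)
    (hgt' : g t' = gt') :
    ∑ s ∈ A, f s + (gt + gt') = ∑ s ∈ A, g s + (ft + ft') := by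
  rw [← Finset.sum_erase_add A f ht', ← Finset.sum_erase_add A g ht',
    ← Finset.sum_erase_add _ f (Finset.mem_erase.2 ⟨hne, ht⟩),
    ← Finset.sum_erase_add _ g (Finset.mem_erase.2 ⟨hne, ht⟩),
    hft, hft', hgt, hgt']
  have hcongr : ∑ s ∈ (A.erase t').erase t, f s = ∑ s ∈ (A.erase t').erase t, g s :=
    Finset.sum_congr rfl fun s hs => by
      have h1 := Finset.mem_erase.1 hs
      have h2 := Finset.mem_erase.1 h1.2
      exact hfg s h2.2 h1.1 h2.1
  omega

end Stmt6Aux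

/-- with a strictly increasing departure schedule `d` and no upper time
windows, for every FCFS-feasible sequence `M` (with retrieval times `r`) there is an
FCFS-feasible sequence `M'` (with retrieval times `r'`) from the same initial
configuration such that: the relocation count of `M'` equals that of `M`, every
container is retrieved in `M'` no later than in `M` (`r' n ≤ r n` for all
`n ∈ {1,…,N}`), and for every time-step `t` of `M'`, if some container is available
at `t` then the move of `M'` at `t` is not idle. -/
theorem stmt6 (C P N : ℕ) (hN : 1 ≤ N) (d : ℕ → ℕ) (hd : StrictSchedule N d)
    (T : ℕ) (M : CRPSeq C P N T) (r : ℕ → ℕ) (hM : CRPFeasible M d 0 r) :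
    ∃ T', ∃ M' : CRPSeq C P N T', ∃ r',
      M'.conf 0 = M.conf 0 ∧ CRPFeasible M' d 0 r' ∧
      relocCount M' = relocCount M ∧
      (∀ n, 1 ≤ n → n ≤ N → r' n ≤ r n) ∧
      ∀ t, 1 ≤ t → t ≤ T' → (∃ n, AvailableAt M' d n t) → M'.mv t ≠ CRPMove.idle := by
  classical
  have main : ∀ μ : ℕ, ∀ T : ℕ, ∀ M : CRPSeq C P N T, ∀ r : ℕ → ℕ,
      CRPFeasible M d 0 r → crpMeasure M ≤ μ →
      ∃ T', ∃ M' : CRPSeq C P N T', ∃ r',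
        M'.conf 0 = M.conf 0 ∧ CRPFeasible M' d 0 r' ∧
        relocCount M' = relocCount M ∧
        (∀ n, 1 ≤ n → n ≤ N → r' n ≤ r n) ∧
        ∀ t, 1 ≤ t → t ≤ T' → (∃ n, AvailableAt M' d n t) → M'.mv t ≠ CRPMove.idle := by
    intro μ
    induction μ using Nat.strong_induction_on with
    | _ μ ih =>
      intro T M r hM hμ
      by_cases hbad : ∃ t, 1 ≤ t ∧ t ≤ T ∧ (∃ n, AvailableAt M d n t) ∧ M.mv t = CRPMove.idle
      · obtain ⟨t, ht1, htT, ⟨n₀, hn₀1, hn₀N, hdn₀, hin₀⟩, hidle_t⟩ := hbad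
        have hret₀ := hM.retrieves n₀ hn₀1 hn₀N
        have htr₀ : t ≤ r n₀ := inbay_le_r hM hn₀1 hn₀N hin₀ htT
        obtain ⟨hr₀1, hr₀T, i₀, hmv₀, hh₀⟩ := hret₀
        have hne₀ : r n₀ ≠ t := by
          intro h
          have hx := hmv₀
          rw [h, hidle_t] at hx
          exact nomatch hx
        have hQ : ∃ s, t < s ∧ s ≤ T ∧ M.mv s ≠ CRPMove.idle :=
          ⟨r n₀, by omega, hr₀T, by rw [hmv₀]; exact fun h => nomatch h⟩
        have hfind := Nat.find_spec hQ
        have hmin : ∀ s, s < Nat.find hQ → ¬(t < s ∧ s ≤ T ∧ M.mv s ≠ CRPMove.idle) :=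
          fun s hs => Nat.find_min hQ hs
        have hfle : Nat.find hQ ≤ r n₀ :=
          Nat.find_min' hQ ⟨by omega, hr₀T, by rw [hmv₀]; exact fun h => nomatch h⟩
        set t' := Nat.find hQ with ht'def
        obtain ⟨htt', ht'T, ht'ni⟩ := hfind
        have hidle_all : ∀ s, t ≤ s → s < t' → M.mv s = CRPMove.idle := by
          intro s hs1 hs2
          rcases Nat.eq_or_lt_of_le hs1 with heq | hlt
          · rw [← heq]; exact hidle_t
          · by_contra hne
            exact hmin s hs2 ⟨hlt, by omega, hne⟩
        set M₁ := swapSeq M t t' ht1 htt' ht'T hidle_all with hM₁def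
        have hcconst : M.conf (t' - 1) = M.conf (t - 1) :=
          conf_const M ht1 ht'T hidle_all (t' - 1) (by omega) (le_refl _)
        have e_conf : ∀ s, s < t → M₁.conf s = M.conf s := by
          intro s h
          show swapConf M t t' s = M.conf s
          exact swapConf_lt M h
        have e_conf_ge : ∀ s, t' ≤ s → M₁.conf s = M.conf s := by
          intro s h
          show swapConf M t t' s = M.conf s
          exact swapConf_ge M h
        have e_mv_t : M₁.mv t = M.mv t' := by
          show swapMv M t t' t = M.mv t'
          exact swapMv_eq_t M
        have e_mv_t' : M₁.mv t' = CRPMove.idle := by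
          show swapMv M t t' t' = CRPMove.idle
          exact swapMv_eq_t' M (by omega)
        have e_mv : ∀ s, s ≠ t → s ≠ t' → M₁.mv s = M.mv s := by
          intro s h1 h2
          show swapMv M t t' s = M.mv s
          exact swapMv_other M h1 h2
        have hdich : ∀ k, 1 ≤ k → k ≤ N → r k < t ∨ r k = t' ∨ t' < r k := by
          intro k h1 h2
          obtain ⟨hk1, hkT, i, hmv, _⟩ := hM.retrieves k h1 h2
          by_contra hcon
          push_neg at hcon
          have hrange : t ≤ r k ∧ r k < t' := by omega
          rw [hidle_all (r k) hrange.1 hrange.2] at hmv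
          exact nomatch hmv
        have hRA : ∀ n, RetrievesAt M n t' → RetrievesAt M₁ n t := by
          intro n hr
          obtain ⟨_, _, i, hmv, hh⟩ := hr
          refine ⟨ht1, htT, i, ?_, ?_⟩
          · rw [e_mv_t]; exact hmv
          · rw [e_conf (t - 1) (by omega), ← hcconst]
            exact hh
        have hRB : ∀ n s, s < t ∨ t' < s → (RetrievesAt M n s ↔ RetrievesAt M₁ n s) := by
          intro n s hs
          have hc : M₁.conf (s - 1) = M.conf (s - 1) := by
            rcases hs with h | h
            · exact e_conf (s - 1) (by omega)
            · exact e_conf_ge (s - 1) (by omega)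
          have hm : M₁.mv s = M.mv s := e_mv s (by omega) (by omega)
          constructor
          · rintro ⟨a, b, i, hmv, hh⟩
            exact ⟨a, b, i, by rw [hm]; exact hmv, by rw [hc]; exact hh⟩
          · rintro ⟨a, b, i, hmv, hh⟩
            rw [hm] at hmv
            rw [hc] at hh
            exact ⟨a, b, i, hmv, hh⟩
        have hRC : ∀ n s, RetrievesAt M₁ n s →
            (s = t ∧ RetrievesAt M n t') ∨ ((s < t ∨ t' < s) ∧ RetrievesAt M n s) := by
          intro n s hr
          have hr2 := hr
          obtain ⟨hs1, hsT, i, hmv, hh⟩ := hr2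
          rcases lt_trichotomy s t with h | h | h
          · exact Or.inr ⟨Or.inl h, (hRB n s (Or.inl h)).2 hr⟩
          · subst h
            rw [e_mv_t] at hmv
            rw [e_conf (s - 1) (by omega)] at hh
            refine Or.inl ⟨rfl, by omega, ht'T, i, hmv, ?_⟩
            rw [hcconst]
            exact hh
          · rcases lt_trichotomy s t' with h' | h' | h'
            · exfalso
              rw [e_mv s (by omega) (by omega), hidle_all s (by omega) h'] at hmv
              exact nomatch hmv
            · exfalso
              subst h'
              rw [e_mv_t'] at hmv
              exact nomatch hmv
            · exact Or.inr ⟨Or.inr h', (hRB n s (Or.inr h')).2 hr⟩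
        have hfeas : CRPFeasible M₁ d 0 (swapR r t t') := by
          refine ⟨?_, ?_, ?_, ?_⟩
          · intro n h1 h2
            have hret := hM.retrieves n h1 h2
            rcases hdich n h1 h2 with h | h | h
            · rw [swapR_neg (by omega)]; exact (hRB n (r n) (Or.inl h)).1 hret
            · rw [swapR_pos h]; rw [h] at hret; exact hRA n hret
            · rw [swapR_neg (by omega)]; exact (hRB n (r n) (Or.inr h)).1 hret
          · intro n s h1 h2 hret
            rcases hRC n s hret with ⟨rfl, hr⟩ | ⟨hs, hr⟩
            · have he := hM.unique n t' h1 h2 hr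
              rw [swapR_pos he.symm]
            · have he := hM.unique n s h1 h2 hr
              rw [he, swapR_neg (by omega)]
          · intro n h1 h2
            by_cases h : r n = t'
            · rw [swapR_pos h]
              by_cases hnn : n = n₀
              · rw [hnn]; exact hdn₀
              · have hlt' : r n < r n₀ := by
                  rcases Nat.lt_or_ge (r n) (r n₀) with h' | h'
                  · exact h'
                  · exfalso
                    have hreq : r n = r n₀ := by omega
                    have e1 := hM.retrieves n h1 h2
                    rw [hreq] at e1
                    exact hnn (retrieval_unique_container e1 (hM.retrieves n₀ hn₀1 hn₀N))
                have hlt : n < n₀ := by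
                  rcases lt_trichotomy n n₀ with h' | h' | h'
                  · exact h'
                  · exact absurd h' hnn
                  · exact absurd (r_mono hM n n₀ hn₀1 h' h2) (by omega)
                exact le_of_lt (lt_of_lt_of_le (hd.2 n n₀ h1 hn₀N hlt) hdn₀)
            · rw [swapR_neg h]; exact hM.onTime n h1 h2
          · intro n h1 h2
            have hiff : ∀ m, 1 ≤ m → m ≤ N → (swapR r t t' m < swapR r t t' n ↔ r m < r n) := by
              intro m hm1 hm2
              have d1 := hdich m hm1 hm2
              have d2 := hdich n h1 h2
              unfold swapR
              split_ifs with e1 e2 e2 <;> omega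
            have hsets : {n' | 1 ≤ n' ∧ n' ≤ N ∧ swapR r t t' n' < swapR r t t' n}
                = {n' | 1 ≤ n' ∧ n' ≤ N ∧ r n' < r n} := by
              ext m
              simp only [Set.mem_setOf_eq]
              constructor
              · rintro ⟨a, b, c⟩; exact ⟨a, b, (hiff m a b).1 c⟩
              · rintro ⟨a, b, c⟩; exact ⟨a, b, (hiff m a b).2 c⟩
            rw [hsets]
            exact hM.flex n h1 h2
        have hreloc : relocCount M₁ = relocCount M := by
          have h1 : (if (M₁.mv t).isReloc = true then 1 else 0)
              = (if (M.mv t').isReloc = true then 1 else 0) := by rw [e_mv_t]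
          have h2 : (if (M₁.mv t').isReloc = true then 1 else 0) = 0 := by rw [e_mv_t']; rfl
          have h3 : (if (M.mv t).isReloc = true then 1 else 0) = 0 := by rw [hidle_t]; rfl
          have hcore := sum_swap_core (A := Finset.Icc 1 T)
            (Finset.mem_Icc.2 ⟨ht1, htT⟩) (Finset.mem_Icc.2 ⟨by omega, ht'T⟩) (by omega)
            (fun s => if (M₁.mv s).isReloc = true then 1 else 0)
            (fun s => if (M.mv s).isReloc = true then 1 else 0)
            (fun s _ hs1 hs2 => by simp only [e_mv s hs1 hs2])
            h1 h2 h3 rfl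
          beta_reduce at hcore
          have hsum : ∑ s ∈ Finset.Icc 1 T, (if (M₁.mv s).isReloc = true then 1 else 0)
              = ∑ s ∈ Finset.Icc 1 T, (if (M.mv s).isReloc = true then 1 else 0) := by omega
          unfold relocCount
          rw [Finset.card_filter, Finset.card_filter]
          exact hsum
        have hmeas : crpMeasure M₁ < crpMeasure M := by
          have h1 : (if (M₁.mv t).isIdle = true then 0 else t) = t := by
            rw [e_mv_t, isIdle_false ht'ni]; rfl
          have h2 : (if (M₁.mv t').isIdle = true then 0 else t') = 0 := by rw [e_mv_t']; rfl
          have h3 : (if (M.mv t).isIdle = true then 0 else t) = 0 := by rw [hidle_t]; rfl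
          have h4 : (if (M.mv t').isIdle = true then 0 else t') = t' := by
            rw [isIdle_false ht'ni]; rfl
          have hcore := sum_swap_core (A := Finset.Icc 1 T)
            (Finset.mem_Icc.2 ⟨ht1, htT⟩) (Finset.mem_Icc.2 ⟨by omega, ht'T⟩) (by omega)
            (fun s => if (M₁.mv s).isIdle = true then 0 else s)
            (fun s => if (M.mv s).isIdle = true then 0 else s)
            (fun s _ hs1 hs2 => by simp only [e_mv s hs1 hs2])
            h1 h2 h3 h4
          beta_reduce at hcore
          unfold crpMeasure
          omega
        obtain ⟨T', M', r', hconf', hfeas', hreloc', hrle', hni'⟩ :=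
          ih (crpMeasure M₁) (by omega) T M₁ (swapR r t t') hfeas (le_refl _)
        refine ⟨T', M', r', ?_, hfeas', ?_, ?_, hni'⟩
        · rw [hconf']
          exact e_conf 0 (by omega)
        · rw [hreloc', hreloc]
        · intro n h1 h2
          refine le_trans (hrle' n h1 h2) ?_
          by_cases h : r n = t'
          · rw [swapR_pos h]; omega
          · rw [swapR_neg h]
      · exact ⟨T, M, r, rfl, hM, rfl, fun n _ _ => le_refl _,
          fun s h1 h2 hav hid => hbad ⟨s, h1, h2, hav, hid⟩⟩
  exact main (crpMeasure M) T M r hM (le_refl _)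
end

section
/- Consider the CRP model with two strictly increasing departure schedules d and d' for the same N containers and the same initial configuration, and no upper time windows. If the set of FCFS-feasible sequences for schedule d is nonempty, then the set of FCFS-feasible sequences for schedule d' is also nonempty, and the minimum relocation count over FCFS-feasible sequences for schedule d equals the minimum relocation count over FCFS-feasible sequences for schedule d'. In particular, the minimum number of relocations needed to retrieve all containers under the FCFS policy depends only on the initial configuration and the retrieval order, not on the actual arrival times of the external trucks. -/
/-- Shift a move sequence by `K` idle steps at the beginning. -/
def CRPSeq.shift {C P N T : ℕ} (M : CRPSeq C P N T) (K : ℕ) : CRPSeq C P N (T + K) where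
  conf t := M.conf (t - K)
  mv t := if K < t then M.mv (t - K) else .idle
  init_height i := by simpa using M.init_height i
  init_labels i := by simpa using M.init_labels i
  init_nodup i := by simpa using M.init_nodup i
  init_disjoint i j h := by simpa using M.init_disjoint i j h
  init_all n h1 h2 := by simpa using M.init_all n h1 h2
  step t ht hT := by
    by_cases h : K < t
    · simp only [if_pos h]
      have h1 : 1 ≤ t - K := by omega
      have h2 : t - 1 - K = t - K - 1 := by omega
      rw [h2]
      exact M.step (t - K) h1 (by omega)
    · simp only [if_neg h]
      show M.conf (t - K) = M.conf (t - 1 - K)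
      have e1 : t - K = 0 := by omega
      have e2 : t - 1 - K = 0 := by omega
      rw [e1, e2]

lemma fcfs_transfer (C P N : ℕ) (d' : ℕ → ℕ) (hd' : StrictSchedule N d')
    (b0 : CRPConfig C) {T : ℕ} {d : ℕ → ℕ} (M : CRPSeq C P N T) (r : ℕ → ℕ)
    (h0 : M.conf 0 = b0) (hf : CRPFeasible M d 0 r) :
    ∃ T', ∃ M' : CRPSeq C P N T', ∃ r', M'.conf 0 = b0 ∧ CRPFeasible M' d' 0 r' ∧
      relocCount M' = relocCount M := by
  set K := d' N with hK
  have hr1 : ∀ n, 1 ≤ n → n ≤ N → 1 ≤ r n := fun n h1 h2 => (hf.retrieves n h1 h2).1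
  have hd'K : ∀ n, 1 ≤ n → n ≤ N → d' n ≤ K := by
    intro n h1 h2
    rcases lt_or_eq_of_le h2 with h | h
    · exact le_of_lt (hd'.2 n N h1 le_rfl h)
    · rw [h]
  refine ⟨T + K, M.shift K, fun n => r n + K, ?_, ?_, ?_⟩
  · show M.conf (0 - K) = b0
    simpa using h0
  · constructor
    · intro n h1 h2
      obtain ⟨ht1, ht2, i, hmv, hhd⟩ := hf.retrieves n h1 h2
      refine ⟨by omega, by omega, i, ?_, ?_⟩
      · show (if K < r n + K then M.mv (r n + K - K) else .idle) = _
        rw [if_pos (by omega), Nat.add_sub_cancel, hmv]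
      · show (M.conf (r n + K - 1 - K) i).head? = some n
        have : r n + K - 1 - K = r n - 1 := by omega
        rw [this]; exact hhd
    · intro n t h1 h2 hret
      obtain ⟨ht1, ht2, i, hmv, hhd⟩ := hret
      have hKt : K < t := by
        by_contra h
        simp only [CRPSeq.shift, if_neg h] at hmv
        cases hmv
      have hmv' : M.mv (t - K) = .retrieve i := by
        simpa only [CRPSeq.shift, if_pos hKt] using hmv
      have hhd' : (M.conf (t - K - 1) i).head? = some n := by
        have : t - 1 - K = t - K - 1 := by omega
        simpa only [CRPSeq.shift, this] using hhd
      have := hf.unique n (t - K) h1 h2 ⟨by omega, by omega, i, hmv', hhd'⟩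
      omega
    · intro n h1 h2
      have := hf.onTime n h1 h2
      have := hd'K n h1 h2
      omega
    · intro n h1 h2
      have hset : {n' | 1 ≤ n' ∧ n' ≤ N ∧ r n' + K < r n + K}
          = {n' | 1 ≤ n' ∧ n' ≤ N ∧ r n' < r n} := by
        ext n'; simp [Nat.add_lt_add_iff_right]
      rw [hset]
      exact hf.flex n h1 h2
  · show ((Finset.Icc 1 (T + K)).filter
        (fun t => ((if K < t then M.mv (t - K) else .idle) : CRPMove C).isReloc = true)).card = _
    rw [relocCount]
    have himg : (Finset.Icc 1 (T + K)).filter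
        (fun t => ((if K < t then M.mv (t - K) else .idle) : CRPMove C).isReloc = true)
        = ((Finset.Icc 1 T).filter (fun t => (M.mv t).isReloc = true)).image (· + K) := by
      ext t
      simp only [Finset.mem_filter, Finset.mem_image, Finset.mem_Icc]
      constructor
      · rintro ⟨⟨ht1, ht2⟩, hrel⟩
        have hKt : K < t := by
          by_contra h
          rw [if_neg h] at hrel
          exact Bool.noConfusion hrel
        rw [if_pos hKt] at hrel
        exact ⟨t - K, ⟨⟨by omega, by omega⟩, hrel⟩, by omega⟩
      · rintro ⟨s, ⟨⟨hs1, hs2⟩, hrel⟩, rfl⟩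
        refine ⟨⟨by omega, by omega⟩, ?_⟩
        rw [if_pos (by omega), Nat.add_sub_cancel]
        exact hrel
    rw [himg, Finset.card_image_of_injective _ (add_left_injective K)]

/-- with two strictly increasing departure schedules `d` and `d'` for the
same `N` containers and the same initial configuration `b0`, and no upper time windows:
if the set of FCFS-feasible sequences for schedule `d` is nonempty, then the set of
FCFS-feasible sequences for schedule `d'` is also nonempty, and the minimum relocation
count over FCFS-feasible sequences for `d` equals that for `d'` — the minimum number of
relocations under FCFS depends only on the initial configuration and the retrieval order,
not on the actual arrival times of the external trucks. -/
theorem stmt9 (C P N : ℕ) (hN : 1 ≤ N) (d d' : ℕ → ℕ)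
    (hd : StrictSchedule N d) (hd' : StrictSchedule N d')
    (b0 : CRPConfig C)
    (hne : ∃ T, ∃ M : CRPSeq C P N T, ∃ r, M.conf 0 = b0 ∧ CRPFeasible M d 0 r) :
    (∃ T, ∃ M : CRPSeq C P N T, ∃ r, M.conf 0 = b0 ∧ CRPFeasible M d' 0 r) ∧
    sInf (FCFSRelocSet C P N d b0) = sInf (FCFSRelocSet C P N d' b0) := by
  obtain ⟨T, M, r, h0, hf⟩ := hne
  obtain ⟨T', M', r', h0', hf', _⟩ := fcfs_transfer C P N d' hd' b0 M r h0 hf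
  refine ⟨⟨T', M', r', h0', hf'⟩, ?_⟩
  have hset : FCFSRelocSet C P N d b0 = FCFSRelocSet C P N d' b0 := by
    ext R
    constructor
    · rintro ⟨T1, M1, r1, h01, hf1, hR⟩
      obtain ⟨T2, M2, r2, h02, hf2, hcnt⟩ := fcfs_transfer C P N d' hd' b0 M1 r1 h01 hf1
      exact ⟨T2, M2, r2, h02, hf2, by rw [hcnt, hR]⟩
    · rintro ⟨T1, M1, r1, h01, hf1, hR⟩
      obtain ⟨T2, M2, r2, h02, hf2, hcnt⟩ := fcfs_transfer C P N d hd b0 M1 r1 h01 hf1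
      exact ⟨T2, M2, r2, h02, hf2, by rw [hcnt, hR]⟩
  rw [hset]
end
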